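/- arXiv:1211.2723 — 4 statements merged into one kernel-verified Lean document; each statement's English description precedes it below -/
import Mathlib

section
/- For every n ≥ 3, the root code R_n = {0, 11, 101, 1001, …, 1 0^{n−2} 1}, whose length sequence is (1, 2, …, n), is an optimal symmetric fix-free code with n codewords; that is, R_n ∈ O_n. -/
/-- A binary string is a `List Bool` (`false` = 0, `true` = 1).
A palindrome is a string equal to its own reversal. -/
def Palin (w : List Bool) : Prop := w.reverse = w

/-- A symmetric fix-free code: a finite set of binary palindromes in which
no element is a proper prefix of another. -/
def IsSFF (C : Finset (List Bool)) : Prop :=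
  (∀ w ∈ C, Palin w) ∧ ∀ u ∈ C, ∀ w ∈ C, u <+: w → u = w

/-- The sorted nondecreasing length sequence of a code. -/
def lenSeq (C : Finset (List Bool)) : List ℕ :=
  (C.val.map List.length).sort (· ≤ ·)

/-- The `i`-th entry (0-indexed) of the sorted length sequence. -/
def nthLen (C : Finset (List Bool)) (i : ℕ) : ℕ := (lenSeq C).getD i 0

/-- `p` is a probability vector with `p 0 ≥ p 1 ≥ ⋯ ≥ p (n-1) > 0`. -/
def IsProbVec (p : ℕ → ℝ) (n : ℕ) : Prop :=
  (∀ i j, i < n → j < n → i ≤ j → p j ≤ p i) ∧ (∀ i < n, 0 < p i) ∧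
    ∑ i ∈ Finset.range n, p i = 1

/-- Expected codeword length of `C` (via its sorted length sequence) under `p`. -/
noncomputable def expLen (p : ℕ → ℝ) (n : ℕ) (C : Finset (List Bool)) : ℝ :=
  ∑ i ∈ Finset.range n, p i * (nthLen C i : ℝ)

/-- `C` is an optimal symmetric fix-free code with `n` codewords: for some
nonincreasing probability vector, its expected length is minimal among all
symmetric fix-free codes with `n` codewords. -/
def IsOptimal (n : ℕ) (C : Finset (List Bool)) : Prop :=
  IsSFF C ∧ C.card = n ∧ ∃ p : ℕ → ℝ, IsProbVec p n ∧
    ∀ C' : Finset (List Bool), IsSFF C' → C'.card = n →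
      expLen p n C ≤ expLen p n C'

/-- Membership in `O_n`: optimal with `n` codewords and not containing the string `1`. -/
def InOpt (n : ℕ) (C : Finset (List Bool)) : Prop :=
  IsOptimal n C ∧ [true] ∉ C

/-- The root codeword `s i`: `s 1 = 0`, and `s i = 1 0^(i-2) 1` for `i ≥ 2`. -/
def rootWord (i : ℕ) : List Bool :=
  if i = 1 then [false] else true :: (List.replicate (i - 2) false ++ [true])

/-- The root code `R_n = {s_1, …, s_n}`. -/
def rootCode (n : ℕ) : Finset (List Bool) :=
  (Finset.Icc 1 n).image rootWord

/-- `N(σ)`: palindromes `w` such that `σ` is the longest palindrome that is a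
proper prefix of `w`. -/
def Nbhd (σ : List Bool) : Set (List Bool) :=
  {w | Palin w ∧ Palin σ ∧ σ <+: w ∧ σ ≠ w ∧
    ∀ u, Palin u → u <+: w → u ≠ w → u.length ≤ σ.length}

/-- `N_n(σ) = {w ∈ N(σ) : |w| ≤ n}`. -/
def NbhdN (n : ℕ) (σ : List Bool) : Set (List Bool) :=
  {w | w ∈ Nbhd σ ∧ w.length ≤ n}

/-- `S_n`: symmetric fix-free codes with `n` codewords, not containing `1`,
all of whose codewords have length at most `n`. -/
def SCodes (n : ℕ) : Set (Finset (List Bool)) :=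
  {C | IsSFF C ∧ C.card = n ∧ [true] ∉ C ∧ ∀ w ∈ C, w.length ≤ n}

/-- The relation `S →^σ T`: `σ ∈ S` and `T ⊆ (S ∪ N_n(σ)) \ {σ}`. -/
def ArrowTo (n : ℕ) (σ : List Bool) (S T : Finset (List Bool)) : Prop :=
  σ ∈ S ∧ ∀ w ∈ T, (w ∈ S ∨ w ∈ NbhdN n σ) ∧ w ≠ σ

/-- The relation `S ⇒^σ T`: `σ ∈ S`, `T ⊆ (S ∪ N_n(σ)) \ {σ}`, `|T| = n`, and
every omitted element of `(S ∪ N_n(σ)) \ {σ}` is at least as long as every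
element of `T` (so `T` consists of `n` shortest words of `(S ∪ N_n(σ)) \ {σ}`). -/
def StepTo (n : ℕ) (σ : List Bool) (S T : Finset (List Bool)) : Prop :=
  ArrowTo n σ S T ∧ T.card = n ∧
  ∀ w : List Bool, (w ∈ S ∨ w ∈ NbhdN n σ) → w ≠ σ → w ∉ T →
    ∀ v ∈ T, v.length ≤ w.length

/-- A `⇒`-transformation `R_n = S⁰ ⇒ S¹ ⇒ ⋯ ⇒ Sᵐ = C` of codes in `S_n`. -/
def IsTransform (n m : ℕ) (S : ℕ → Finset (List Bool)) (C : Finset (List Bool)) : Prop :=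
  S 0 = rootCode n ∧ S m = C ∧ (∀ i ≤ m, S i ∈ SCodes n) ∧
  ∀ i < m, ∃ σ, StepTo n σ (S i) (S (i + 1))

/-- A `⇒`-transformation with the witness `π i` used for the step `S i ⇒ S (i+1)`
(so `π 0, …, π (m-1)` are `π_1, …, π_m`). -/
def IsTransformW (n m : ℕ) (S : ℕ → Finset (List Bool)) (π : ℕ → List Bool)
    (C : Finset (List Bool)) : Prop :=
  S 0 = rootCode n ∧ S m = C ∧ (∀ i ≤ m, S i ∈ SCodes n) ∧
  ∀ i < m, StepTo n (π i) (S i) (S (i + 1))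

/-- `C^prefix`: palindromes other than `1` that are proper prefixes of some codeword of `C`. -/
def prefixSet (C : Finset (List Bool)) : Set (List Bool) :=
  {u | Palin u ∧ u ≠ [true] ∧ ∃ w ∈ C, u <+: w ∧ u ≠ w}

/-- Maximum codeword length of a code. -/
def maxLen (C : Finset (List Bool)) : ℕ := C.sup List.length

/-- Bitwise complement of a binary string. -/
def bcomp (w : List Bool) : List Bool := w.map (fun b => !b)

/-- `Dominates n l l'`: the sorted nondecreasing sequence `l` dominates `l'`,
i.e. `Σ_{j=1}^i l'_j ≥ Σ_{j=1}^i l_j` for every `i ∈ {1,…,n}`. -/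
def Dominates (n : ℕ) (l l' : ℕ → ℕ) : Prop :=
  ∀ i ≤ n, ∑ j ∈ Finset.range i, l j ≤ ∑ j ∈ Finset.range i, l' j

/-- Membership in `D_n`: codes in `S_n` whose length sequence is not dominated by
the length sequence of any code in `S_n` having a different length sequence. -/
def InD (n : ℕ) (S : Finset (List Bool)) : Prop :=
  S ∈ SCodes n ∧ ∀ C ∈ SCodes n, lenSeq C ≠ lenSeq S →
    ¬ Dominates n (nthLen C) (nthLen S)


/-! ### Auxiliary lemmas -/

section Aux

open List Finset

/- rootWord basics -/

lemma rootWord_one : rootWord 1 = [false] := rfl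

lemma rootWord_of_ge {a : ℕ} :
    rootWord (a + 2) = true :: (List.replicate a false ++ [true]) := by
  simp [rootWord]

lemma rootWord_length {i : ℕ} (hi : 1 ≤ i) : (rootWord i).length = i := by
  unfold rootWord
  split
  · simp_all
  · simp; omega

lemma palin_rootWord (i : ℕ) : Palin (rootWord i) := by
  unfold rootWord Palin
  split
  · rfl
  · simp

lemma rootWord_prefix {i j : ℕ} (hi : 1 ≤ i) (hj : 1 ≤ j)
    (h : rootWord i <+: rootWord j) : i = j := by
  by_contra hne
  have hlen : i ≤ j := by
    have := h.length_le
    rwa [rootWord_length hi, rootWord_length hj] at this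
  have hij : i < j := lt_of_le_of_ne hlen hne
  rcases Nat.lt_or_ge i 2 with h1 | h2
  · -- i = 1
    have hi1 : i = 1 := by omega
    obtain ⟨b, rfl⟩ : ∃ b, j = b + 2 := ⟨j - 2, by omega⟩
    subst hi1
    obtain ⟨t, ht⟩ := h
    rw [rootWord_one, rootWord_of_ge] at ht
    simp at ht
  · obtain ⟨a, rfl⟩ : ∃ a, i = a + 2 := ⟨i - 2, by omega⟩
    obtain ⟨b, rfl⟩ : ∃ b, j = b + 2 := ⟨j - 2, by omega⟩
    have hab : a < b := by omega
    have htake := List.prefix_iff_eq_take.1 h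
    rw [rootWord_length hi, rootWord_of_ge, rootWord_of_ge] at htake
    rw [show a + 2 = (a+1) + 1 from rfl, List.take_succ_cons,
      List.take_append_of_le_length (by simp; omega),
      List.take_replicate] at htake
    have : (true : Bool) ∈ List.replicate ((a+1) ⊓ b) false := by
      injection htake with _ h2
      rw [← h2]
      simp
    simpa using List.eq_of_mem_replicate this

/- rootCode basics -/

lemma rootWord_injOn (n : ℕ) : Set.InjOn rootWord (Finset.Icc 1 n) := by
  intro i hi j hj h
  simp only [Finset.coe_Icc, Set.mem_Icc] at hi hj
  have := congrArg List.length h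
  rwa [rootWord_length hi.1, rootWord_length hj.1] at this

lemma rootCode_card (n : ℕ) : (rootCode n).card = n := by
  rw [rootCode, Finset.card_image_of_injOn (rootWord_injOn n), Nat.card_Icc]
  omega

lemma mem_rootCode {w : List Bool} {n : ℕ} :
    w ∈ rootCode n ↔ ∃ i, 1 ≤ i ∧ i ≤ n ∧ rootWord i = w := by
  simp [rootCode, Finset.mem_Icc, and_assoc]

lemma rootCode_sff (n : ℕ) : IsSFF (rootCode n) := by
  constructor
  · intro w hw
    obtain ⟨i, _, _, rfl⟩ := mem_rootCode.1 hw
    exact palin_rootWord i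
  · intro u hu w hw hp
    obtain ⟨i, hi1, _, rfl⟩ := mem_rootCode.1 hu
    obtain ⟨j, hj1, _, rfl⟩ := mem_rootCode.1 hw
    rw [rootWord_prefix hi1 hj1 hp]

lemma true_not_mem_rootCode (n : ℕ) : [true] ∉ rootCode n := by
  intro h
  obtain ⟨i, hi1, _, heq⟩ := mem_rootCode.1 h
  have := congrArg List.length heq
  rw [rootWord_length hi1] at this
  simp at this
  subst this
  simp [rootWord_one] at heq

end Aux

section Aux2

open List Finset

/- lenSeq basics -/

lemma lenSeq_coe (C : Finset (List Bool)) :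
    (↑(lenSeq C) : Multiset ℕ) = C.val.map List.length :=
  Multiset.sort_eq _ _

lemma lenSeq_length (C : Finset (List Bool)) : (lenSeq C).length = C.card := by
  rw [lenSeq, Multiset.length_sort, Multiset.card_map]
  rfl

lemma lenSeq_sorted (C : Finset (List Bool)) : (lenSeq C).Pairwise (· ≤ ·) :=
  Multiset.pairwise_sort _ _

lemma exists_word_nthLen (C : Finset (List Bool)) (i : ℕ) (hi : i < C.card) :
    ∃ w ∈ C, w.length = nthLen C i := by
  have hi' : i < (lenSeq C).length := by rwa [lenSeq_length]
  have hmem : nthLen C i ∈ lenSeq C := by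
    rw [nthLen, List.getD_eq_getElem _ _ hi']
    exact List.getElem_mem _
  have h2 : nthLen C i ∈ C.val.map List.length := by
    rw [← lenSeq_coe]
    exact hmem
  obtain ⟨w, hw, hwl⟩ := Multiset.mem_map.1 h2
  exact ⟨w, hw, hwl⟩

lemma nthLen_mono (C : Finset (List Bool)) {i k : ℕ} (h : i ≤ k) (hk : k < C.card) :
    nthLen C i ≤ nthLen C k := by
  rcases eq_or_lt_of_le h with rfl | hlt
  · exact le_rfl
  · have hk' : k < (lenSeq C).length := by rwa [lenSeq_length]
    have hi' : i < (lenSeq C).length := by omega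
    have := (lenSeq_sorted C).rel_get_of_lt (a := ⟨i, hi'⟩) (b := ⟨k, hk'⟩) hlt
    rw [nthLen, nthLen, List.getD_eq_getElem _ _ hi', List.getD_eq_getElem _ _ hk']
    simpa [List.get_eq_getElem] using this

lemma word_ne_nil {C : Finset (List Bool)} (hC : IsSFF C) (h2 : 2 ≤ C.card)
    {w : List Bool} (hw : w ∈ C) : w ≠ [] := by
  intro hnil
  subst hnil
  obtain ⟨v, hv, hvne⟩ := Finset.exists_mem_ne (s := C) (by omega) ([] : List Bool)
  exact hvne (hC.2 [] hw v hv List.nil_prefix).symm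

/- lenSeq of the root code -/

lemma rootCode_val (n : ℕ) :
    (rootCode n).val = (Finset.Icc 1 n).val.map rootWord :=
  Finset.image_val_of_injOn (rootWord_injOn n)

lemma lenSeq_rootCode (n : ℕ) : lenSeq (rootCode n) = List.range' 1 n := by
  apply List.Perm.eq_of_pairwise' (lenSeq_sorted _)
    ((List.pairwise_le_range') : List.Pairwise (· ≤ ·) (List.range' 1 n)) ?_
  rw [← Multiset.coe_eq_coe, lenSeq_coe, rootCode_val, Multiset.map_map]
  have h1 : (Finset.Icc 1 n).val.map (List.length ∘ rootWord)
      = (Finset.Icc 1 n).val.map id := by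
    apply Multiset.map_congr rfl
    intro x hx
    have : 1 ≤ x := by
      have := Finset.mem_Icc.1 (Finset.mem_def.2 hx)
      exact this.1
    simp [rootWord_length this]
  rw [h1, Multiset.map_id, Nat.Icc_eq_range']
  simp

lemma nthLen_rootCode {n i : ℕ} (hi : i < n) : nthLen (rootCode n) i = i + 1 := by
  rw [nthLen, lenSeq_rootCode]
  rw [List.getD_eq_getElem _ _ (by simpa using hi), List.getElem_range']
  omega

end Aux2

section Aux3

open List Finset

/-- In an SFF code containing `0` but not `1`, which has a word of every length
`1..k`, every word of length `m ≤ k` equals the root word of length `m`. -/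
lemma uniq_word {C : Finset (List Bool)} (hC : IsSFF C) (hf : [false] ∈ C)
    (ht : [true] ∉ C) (k : ℕ)
    (hcov : ∀ m, 1 ≤ m → m ≤ k → ∃ w ∈ C, w.length = m) :
    ∀ m, ∀ w ∈ C, w.length = m → 1 ≤ m → m ≤ k → w = rootWord m := by
  intro m
  induction m using Nat.strong_induction_on with
  | _ m ih =>
    intro w hw hlen hm1 hmk
    rcases w with _ | ⟨b, t⟩
    · simp at hlen; omega
    · cases b
      · -- starts with 0: then w = [false]
        have hpre : [false] <+: (false :: t) := ⟨t, rfl⟩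
        have he := hC.2 _ hf _ hw hpre
        rw [← he] at hlen ⊢
        simp at hlen
        rw [← hlen, rootWord_one]
      · -- starts with 1
        rcases eq_or_ne t [] with rfl | htne
        · exact absurd hw ht
        · have hpal : (true :: t).reverse = true :: t := hC.1 _ hw
          -- t is not all-false
          have hdne : t.dropWhile (fun x => !x) ≠ [] := by
            intro hd
            have hall : ∀ x ∈ t, x = false := by
              intro x hx
              have := List.dropWhile_eq_nil_iff.1 hd x hx
              simpa using this
            have h2 : t.reverse ++ [true] = true :: t := by
              rw [← hpal]; simp
            have h3 : (t.reverse ++ [true]).getLast (by simp) = (true :: t).getLast (by simp) := by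
              congr 1
            rw [List.getLast_concat, List.getLast_cons htne] at h3
            exact absurd (hall _ (List.getLast_mem htne)) (by rw [← h3]; simp)
          set d := t.dropWhile (fun x => !x) with hd
          have hhead : d.head hdne = true := by
            have := List.head_dropWhile_not (fun x => !x) hdne
            simpa [← hd] using this
          set a := (t.takeWhile (fun x => !x)).length with ha
          have htw : t.takeWhile (fun x => !x) = List.replicate a false := by
            apply List.eq_replicate_of_mem
            intro x hx
            have := List.mem_takeWhile_imp hx
            simpa using this
          have htd : t = List.replicate a false ++ (true :: d.tail) := by
            conv_lhs => rw [← List.takeWhile_append_dropWhile (p := fun x => !x) (l := t)]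
            rw [htw, ← hd]
            congr 1
            rw [← hhead]
            exact (List.cons_head_tail hdne).symm
          set r := d.tail with hr
          have hwform : (true :: t) = rootWord (a + 2) ++ r := by
            rw [rootWord_of_ge, htd]
            simp
          have hlena : a + 2 + r.length = m := by
            have := congrArg List.length hwform
            rw [hlen] at this
            rw [this]
            simp [rootWord_length (show 1 ≤ a + 2 by omega)]
          rcases eq_or_ne r [] with hrnil | hrne
          · rw [hwform, hrnil, List.append_nil]
            congr 1
            rw [hrnil] at hlena
            simp at hlena
            omega
          · have hlt : a + 2 < m := by
              have : 1 ≤ r.length := by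
                rcases r with _ | _
                · exact absurd rfl hrne
                · simp
              omega
            obtain ⟨v, hv, hvl⟩ := hcov (a + 2) (by omega) (by omega)
            have hveq := ih (a + 2) hlt v hv hvl (by omega) (by omega)
            have hu : rootWord (a + 2) ∈ C := by rw [← hveq]; exact hv
            have hupre : rootWord (a + 2) <+: (true :: t) := ⟨r, hwform.symm⟩
            have := hC.2 _ hu _ hw hupre
            have := congrArg List.length this
            rw [rootWord_length (show 1 ≤ a + 2 by omega), hlen] at this
            omega

lemma card_le_two {C : Finset (List Bool)} (hC : IsSFF C)
    (hf : [false] ∈ C) (ht : [true] ∈ C) : C.card ≤ 2 := by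
  have hsub : C ⊆ {[false], [true]} := by
    intro w hw
    rcases w with _ | ⟨b, t⟩
    · have := hC.2 _ hw _ hf List.nil_prefix
      simp at this
    · cases b
      · have := hC.2 _ hf _ hw ⟨t, rfl⟩
        simp [← this]
      · have := hC.2 _ ht _ hw ⟨t, rfl⟩
        simp [← this]
  calc C.card ≤ ({[false], [true]} : Finset (List Bool)).card := Finset.card_le_card hsub
    _ ≤ 2 := Finset.card_insert_le _ _ |>.trans (by simp)

/- bcomp -/

lemma bcomp_bcomp (w : List Bool) : bcomp (bcomp w) = w := by
  simp [bcomp, List.map_map, Function.comp_def]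

lemma bcomp_length (w : List Bool) : (bcomp w).length = w.length := by
  simp [bcomp]

lemma bcomp_inj {u w : List Bool} (h : bcomp u = bcomp w) : u = w := by
  rw [← bcomp_bcomp u, h, bcomp_bcomp]

lemma palin_bcomp {w : List Bool} (h : Palin w) : Palin (bcomp w) := by
  unfold Palin bcomp at *
  rw [← List.map_reverse, h]

lemma bcomp_prefix {u w : List Bool} (h : u <+: w) : bcomp u <+: bcomp w :=
  List.IsPrefix.map _ h

lemma sff_bcomp {C : Finset (List Bool)} (hC : IsSFF C) :
    IsSFF (C.image bcomp) := by
  constructor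
  · intro w hw
    obtain ⟨v, hv, rfl⟩ := Finset.mem_image.1 hw
    exact palin_bcomp (hC.1 v hv)
  · intro u hu w hw hp
    obtain ⟨u', hu', rfl⟩ := Finset.mem_image.1 hu
    obtain ⟨w', hw', rfl⟩ := Finset.mem_image.1 hw
    have h2 : u' <+: w' := by
      have := bcomp_prefix hp
      rwa [bcomp_bcomp, bcomp_bcomp] at this
    rw [hC.2 _ hu' _ hw' h2]

/-- Key combinatorial contradiction: an SFF code with at least 3 codewords cannot
contain a word of each length `1..j` together with two distinct words of length `j`. -/
lemma no_dup_len {C : Finset (List Bool)} (hC : IsSFF C) (h3 : 3 ≤ C.card)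
    (j : ℕ) (hj : 1 ≤ j)
    (hcov : ∀ m, 1 ≤ m → m ≤ j → ∃ w ∈ C, w.length = m)
    {w₁ w₂ : List Bool} (h1 : w₁ ∈ C) (h2 : w₂ ∈ C) (hne : w₁ ≠ w₂)
    (e1 : w₁.length = j) (e2 : w₂.length = j) : False := by
  obtain ⟨u, hu, hul⟩ := hcov 1 le_rfl hj
  rcases u with _ | ⟨b, t⟩
  · simp at hul
  · have htnil : t = [] := by simpa using hul
    subst htnil
    cases b
    · -- [false] ∈ C
      by_cases hT : [true] ∈ C
      · exact absurd (card_le_two hC hu hT) (by omega)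
      · have r1 := uniq_word hC hu hT j hcov j w₁ h1 e1 hj le_rfl
        have r2 := uniq_word hC hu hT j hcov j w₂ h2 e2 hj le_rfl
        exact hne (r1.trans r2.symm)
    · -- [true] ∈ C
      by_cases hF : [false] ∈ C
      · exact absurd (card_le_two hC hF hu) (by omega)
      · set D := C.image bcomp with hD
        have hfD : [false] ∈ D := Finset.mem_image.2 ⟨[true], hu, rfl⟩
        have htD : [true] ∉ D := by
          intro h
          obtain ⟨v, hv, hveq⟩ := Finset.mem_image.1 h
          have : v = [false] := by
            have := congrArg bcomp hveq
            rw [bcomp_bcomp] at this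
            exact this
          exact hF (this ▸ hv)
        have hcovD : ∀ m, 1 ≤ m → m ≤ j → ∃ w ∈ D, w.length = m := by
          intro m hm1 hmj
          obtain ⟨w, hw, hwl⟩ := hcov m hm1 hmj
          exact ⟨bcomp w, Finset.mem_image.2 ⟨w, hw, rfl⟩, by rw [bcomp_length, hwl]⟩
        have r1 := uniq_word (sff_bcomp hC) hfD htD j hcovD j (bcomp w₁)
          (Finset.mem_image.2 ⟨w₁, h1, rfl⟩) (by rw [bcomp_length, e1]) hj le_rfl
        have r2 := uniq_word (sff_bcomp hC) hfD htD j hcovD j (bcomp w₂)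
          (Finset.mem_image.2 ⟨w₂, h2, rfl⟩) (by rw [bcomp_length, e2]) hj le_rfl
        exact hne (bcomp_inj (r1.trans r2.symm))

end Aux3

section Aux4

open List Finset

lemma two_words_of_dup (C : Finset (List Bool)) (j i : ℕ) (hi : i + 1 < C.card)
    (h : nthLen C i = j) (h' : nthLen C (i + 1) = j) :
    ∃ w₁ ∈ C, ∃ w₂ ∈ C, w₁ ≠ w₂ ∧ w₁.length = j ∧ w₂.length = j := by
  have hlen : (lenSeq C).length = C.card := lenSeq_length C
  have hi1 : i < (lenSeq C).length := by omega
  have hi2 : i + 1 < (lenSeq C).length := by omega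
  have hgi : (lenSeq C)[i] = j := by
    rw [← List.getD_eq_getElem _ 0 hi1]; exact h
  have hgi2 : (lenSeq C)[i+1] = j := by
    rw [← List.getD_eq_getElem _ 0 hi2]; exact h'
  have hdrop : List.drop i (lenSeq C) = j :: j :: List.drop (i + 2) (lenSeq C) := by
    rw [← List.getElem_cons_drop hi1, hgi]
    congr 1
    rw [← List.getElem_cons_drop hi2, hgi2]
  have hsub : [j, j] <+ lenSeq C := by
    have h1 : [j, j] <+ List.drop i (lenSeq C) := by
      rw [hdrop]
      exact ((List.nil_sublist _).cons₂ j).cons₂ j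
    exact h1.trans (List.drop_sublist _ _)
  have hcount : 2 ≤ List.count j (lenSeq C) := by
    have := hsub.count_le j
    simpa using this
  have hmcount : 2 ≤ Multiset.count j (C.val.map List.length) := by
    rw [← lenSeq_coe, Multiset.coe_count]
    exact hcount
  rw [Multiset.count_map] at hmcount
  have hcard : 1 < (C.filter (fun w => j = w.length)).card := by
    rw [Finset.card_def, Finset.filter_val]
    omega
  obtain ⟨a, ha, b, hb, hab⟩ := Finset.one_lt_card.1 hcard
  simp only [Finset.mem_filter] at ha hb
  exact ⟨a, ha.1, b, hb.1, hab, ha.2.symm, hb.2.symm⟩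

end Aux4

section Aux5

open List Finset

/-- Lexicographic minimality of the root sequence: if the sorted length sequence of
an SFF code with `n ≥ 3` codewords starts `1, 2, …, j`, then its next entry is `≥ j+1`. -/
lemma lex_min {C : Finset (List Bool)} (hC : IsSFF C) {n : ℕ} (hn : 3 ≤ n)
    (hcard : C.card = n) {j : ℕ} (hj : j < n)
    (hpre : ∀ i < j, nthLen C i = i + 1) : j + 1 ≤ nthLen C j := by
  by_contra hlt
  push_neg at hlt
  obtain ⟨w, hw, hwl⟩ := exists_word_nthLen C j (by omega)
  rcases Nat.eq_zero_or_pos j with rfl | hj1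
  · have hw0 : w.length = 0 := by omega
    exact word_ne_nil hC (by omega) hw (List.length_eq_zero_iff.1 hw0)
  · have hjm : nthLen C (j - 1) = j := by
      have := hpre (j - 1) (by omega)
      omega
    have hle : nthLen C (j - 1) ≤ nthLen C j := nthLen_mono C (by omega) (by omega)
    have hLj : nthLen C j = j := by omega
    obtain ⟨w₁, h1, w₂, h2, hne, e1, e2⟩ :=
      two_words_of_dup C j (j - 1) (by omega)
        (by rw [hjm]) (by rw [show j - 1 + 1 = j by omega, hLj])
    have hcov : ∀ m, 1 ≤ m → m ≤ j → ∃ v ∈ C, v.length = m := by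
      intro m hm1 hmj
      rcases eq_or_lt_of_le hmj with rfl | hmlt
      · exact ⟨w₁, h1, e1⟩
      · obtain ⟨v, hv, hvl⟩ := exists_word_nthLen C (m - 1) (by omega)
        refine ⟨v, hv, ?_⟩
        rw [hvl, hpre (m - 1) (by omega)]
        omega
    exact no_dup_len hC (by omega) j hj1 hcov h1 h2 hne e1 e2

end Aux5

/-- For every `n ≥ 3`, the root code `R_n` is an optimal symmetric
fix-free code with `n` codewords, i.e. `R_n ∈ O_n`. -/
theorem root_code_optimal (n : ℕ) (hn : 3 ≤ n) : InOpt n (rootCode n) := by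
  refine ⟨⟨rootCode_sff n, rootCode_card n, ?_⟩, true_not_mem_rootCode n⟩
  have hn0 : (0:ℝ) < (n:ℝ) := by exact_mod_cast (by omega : 0 < n)
  set q : ℝ := 1 / (2 * (n:ℝ)^2) with hqdef
  have hq0 : 0 < q := by rw [hqdef]; positivity
  have hq1 : q < 1 := by
    rw [hqdef, div_lt_one (by positivity)]
    have h3 : (3:ℝ) ≤ (n:ℝ) := by exact_mod_cast hn
    nlinarith [h3]
  have hS : 0 < ∑ i ∈ Finset.range n, q ^ i :=
    Finset.sum_pos (fun i _ => pow_pos hq0 i)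
      (Finset.nonempty_range_iff.2 (by omega))
  set c : ℝ := (∑ i ∈ Finset.range n, q ^ i)⁻¹ with hcdef
  have hc0 : 0 < c := inv_pos.2 hS
  refine ⟨fun i => q ^ i * c, ⟨?_, ?_, ?_⟩, ?_⟩
  · intro i j _ _ hij
    exact mul_le_mul_of_nonneg_right (pow_le_pow_of_le_one hq0.le hq1.le hij) hc0.le
  · intro i _
    positivity
  · rw [← Finset.sum_mul, hcdef, mul_inv_cancel₀ hS.ne']
  · intro C' hC' hcard'
    unfold expLen
    simp only
    have hl1 : ∀ i < n, 1 ≤ nthLen C' i := by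
      intro i hi
      obtain ⟨w, hw, hwl⟩ := exists_word_nthLen C' i (by omega)
      have hne := word_ne_nil hC' (by omega) hw
      rw [← hwl]
      rcases w with _ | _
      · exact absurd rfl hne
      · simp
    set F : ℕ → ℝ := fun i => q ^ i * c * ((i:ℝ) + 1) with hF
    set G : ℕ → ℝ := fun i => q ^ i * c * ((nthLen C' i : ℕ) : ℝ) with hG
    have hroot : ∑ i ∈ Finset.range n, q ^ i * c * ((nthLen (rootCode n) i : ℕ) : ℝ)
        = ∑ i ∈ Finset.range n, F i := by
      apply Finset.sum_congr rfl
      intro i hi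
      rw [nthLen_rootCode (Finset.mem_range.1 hi), hF]
      push_cast
      ring
    rw [hroot]
    show ∑ i ∈ Finset.range n, F i ≤ ∑ i ∈ Finset.range n, G i
    by_cases hall : ∀ i < n, nthLen C' i = i + 1
    · apply le_of_eq
      apply Finset.sum_congr rfl
      intro i hi
      rw [hF, hG]
      simp only
      rw [hall i (Finset.mem_range.1 hi)]
      push_cast
      ring
    · push_neg at hall
      obtain ⟨j, hjn, hjne, hpre⟩ :
          ∃ j, j < n ∧ nthLen C' j ≠ j + 1 ∧ ∀ i < j, nthLen C' i = i + 1 := by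
        have hex : ∃ i, i < n ∧ nthLen C' i ≠ i + 1 := hall
        refine ⟨Nat.find hex, (Nat.find_spec hex).1, (Nat.find_spec hex).2, ?_⟩
        intro i hi
        by_contra hne
        have hn' := (Nat.find_spec hex).1
        exact Nat.find_min hex hi ⟨by omega, hne⟩
      have hlj : j + 2 ≤ nthLen C' j := by
        have := lex_min hC' hn hcard' hjn hpre
        omega
      have hsplitF : ∑ i ∈ Finset.range n, F i
          = ∑ i ∈ Finset.range j, F i + (F j + ∑ i ∈ Finset.Ico (j+1) n, F i) := by
        rw [← Finset.sum_range_add_sum_Ico F (le_of_lt hjn),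
          Finset.sum_eq_sum_Ico_succ_bot hjn]
      have hsplitG : ∑ i ∈ Finset.range n, G i
          = ∑ i ∈ Finset.range j, G i + (G j + ∑ i ∈ Finset.Ico (j+1) n, G i) := by
        rw [← Finset.sum_range_add_sum_Ico G (le_of_lt hjn),
          Finset.sum_eq_sum_Ico_succ_bot hjn]
      have heq0 : ∑ i ∈ Finset.range j, F i = ∑ i ∈ Finset.range j, G i := by
        apply Finset.sum_congr rfl
        intro i hi
        rw [hF, hG]
        simp only
        rw [hpre i (Finset.mem_range.1 hi)]
        push_cast
        ring
      have hGj : F j + q ^ j * c ≤ G j := by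
        have hcast : ((j:ℝ) + 2) ≤ ((nthLen C' j : ℕ) : ℝ) := by exact_mod_cast hlj
        have h1 := mul_le_mul_of_nonneg_left hcast (mul_nonneg (pow_nonneg hq0.le j) hc0.le)
        calc F j + q ^ j * c = q ^ j * c * ((j:ℝ) + 2) := by rw [hF]; ring
          _ ≤ G j := by rw [hG]; exact h1
      have htail1 : ∑ i ∈ Finset.Ico (j+1) n, q ^ i * c * (i:ℝ) ≤ q ^ j * c := by
        have hterm : ∀ i ∈ Finset.Ico (j+1) n, q ^ i * c * (i:ℝ) ≤ q ^ (j+1) * c * (n:ℝ) := by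
          intro i hi
          rw [Finset.mem_Ico] at hi
          have h1 : q ^ i ≤ q ^ (j+1) := pow_le_pow_of_le_one hq0.le hq1.le hi.1
          have h2 : (i:ℝ) ≤ (n:ℝ) := by exact_mod_cast hi.2.le
          exact mul_le_mul (mul_le_mul_of_nonneg_right h1 hc0.le) h2
            (Nat.cast_nonneg i) (mul_nonneg (pow_nonneg hq0.le (j+1)) hc0.le)
        have hs := Finset.sum_le_card_nsmul _ _ _ hterm
        rw [nsmul_eq_mul] at hs
        have hcd : ((Finset.Ico (j+1) n).card : ℝ) ≤ (n:ℝ) := by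
          rw [Nat.card_Ico]
          exact_mod_cast Nat.sub_le n (j+1)
        have h5 : ((Finset.Ico (j+1) n).card : ℝ) * (q ^ (j+1) * c * (n:ℝ))
            ≤ (n:ℝ) * (q ^ (j+1) * c * (n:ℝ)) :=
          mul_le_mul_of_nonneg_right hcd
            (mul_nonneg (mul_nonneg (pow_nonneg hq0.le (j+1)) hc0.le) hn0.le)
        have h6 : (n:ℝ) * (q ^ (j+1) * c * (n:ℝ)) ≤ q ^ j * c := by
          have hqn : q * (n:ℝ)^2 = 1/2 := by
            rw [hqdef]
            field_simp
          have h7 : (n:ℝ) * (q ^ (j+1) * c * (n:ℝ)) = q ^ j * c * (q * (n:ℝ)^2) := by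
            rw [pow_succ]; ring
          rw [h7, hqn]
          nlinarith [pow_pos hq0 j, hc0]
        linarith
      have htail : ∑ i ∈ Finset.Ico (j+1) n, F i
          ≤ q ^ j * c + ∑ i ∈ Finset.Ico (j+1) n, G i := by
        have hFi : ∑ i ∈ Finset.Ico (j+1) n, F i
            = ∑ i ∈ Finset.Ico (j+1) n, q ^ i * c * (i:ℝ)
              + ∑ i ∈ Finset.Ico (j+1) n, q ^ i * c := by
          rw [← Finset.sum_add_distrib]
          apply Finset.sum_congr rfl
          intro i _
          rw [hF]
          push_cast
          ring
        have hGi : ∑ i ∈ Finset.Ico (j+1) n, q ^ i * c ≤ ∑ i ∈ Finset.Ico (j+1) n, G i := by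
          apply Finset.sum_le_sum
          intro i hi
          rw [Finset.mem_Ico] at hi
          have hcast : (1:ℝ) ≤ ((nthLen C' i : ℕ) : ℝ) := by
            exact_mod_cast hl1 i hi.2
          rw [hG]
          calc q ^ i * c = q ^ i * c * 1 := by ring
            _ ≤ q ^ i * c * ((nthLen C' i : ℕ) : ℝ) :=
              mul_le_mul_of_nonneg_left hcast (mul_nonneg (pow_nonneg hq0.le i) hc0.le)
        rw [hFi]
        linarith
      rw [hsplitF, hsplitG, heq0]
      linarith
end

section
/- If C is an optimal binary symmetric fix-free code with n codewords and sorted nondecreasing length sequence (l_1, l_2, …, l_n), then l_i ≤ n for every i ∈ {1,…,n} and Σ_{i=1}^n l_i ≤ n(n+1)/2. -/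
namespace SFFAux


/-- sum over range of getD equals list sum -/
lemma sum_getD (l : List ℕ) : ∑ j ∈ Finset.range l.length, l.getD j 0 = l.sum := by
  induction l with
  | nil => simp
  | cons x t ih =>
    rw [List.length_cons, Finset.sum_range_succ', List.sum_cons]
    simp only [List.getD_cons_succ, List.getD_cons_zero]
    rw [ih]; ring

lemma sum_getD_take (l : List ℕ) (i : ℕ) (hi : i ≤ l.length) :
    ∑ j ∈ Finset.range i, l.getD j 0 = (l.take i).sum := by
  have h1 : (l.take i).length = i := by simp [hi]
  have h2 : ∑ j ∈ Finset.range i, l.getD j 0 = ∑ j ∈ Finset.range i, (l.take i).getD j 0 := by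
    apply Finset.sum_congr rfl
    intro j hj
    rw [Finset.mem_range] at hj
    rw [List.getD_eq_getElem?_getD, List.getD_eq_getElem?_getD, List.getElem?_take]
    simp [hj]
  rw [h2]
  have h3 := sum_getD (l.take i)
  rwa [h1] at h3

/-- countP of sorted list from below -/
lemma sorted_le_countP (l : List ℕ) (hs : l.Pairwise (· ≤ ·)) (j : ℕ) (hj : j < l.length) :
    j + 1 ≤ l.countP (fun x => decide (x ≤ l.getD j 0)) := by
  induction l generalizing j with
  | nil => simp at hj
  | cons a t ih =>
    cases j with
    | zero =>
      simp only [List.getD_cons_zero, List.countP_cons]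
      have hd : decide (a ≤ a) = true := by simp
      rw [hd]
      simp
    | succ j =>
      simp only [List.getD_cons_succ, List.countP_cons]
      have hj' : j < t.length := by simpa using hj
      have hmem : t.getD j 0 ∈ t := by
        rw [List.getD_eq_getElem?_getD, List.getElem?_eq_getElem hj']
        exact List.getElem_mem hj'
      have ha : a ≤ t.getD j 0 := List.rel_of_pairwise_cons hs hmem
      have hih := ih hs.of_cons j hj'
      have hd : decide (a ≤ t.getD j 0) = true := by simpa using ha
      rw [hd]
      simp only [if_pos]
      omega

/-- sorted list: many small elements forces small prefix entries -/
lemma countP_sorted_getD_le (l : List ℕ) (hs : l.Pairwise (· ≤ ·)) (x j : ℕ)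
    (hc : j + 1 ≤ l.countP (fun y => decide (y ≤ x))) : l.getD j 0 ≤ x := by
  induction l generalizing j with
  | nil => rw [List.countP_nil] at hc; omega
  | cons a t ih =>
    cases j with
    | zero =>
      simp only [List.getD_cons_zero]
      by_contra hax
      push_neg at hax
      have : ∀ y ∈ a :: t, ¬ (y ≤ x) := by
        intro y hy
        rcases List.mem_cons.mp hy with rfl | hy'
        · omega
        · have := List.rel_of_pairwise_cons hs hy'; omega
      have : (a :: t).countP (fun y => decide (y ≤ x)) = 0 := by
        rw [List.countP_eq_zero]
        intro y hy
        simpa using this y hy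
      omega
    | succ j =>
      simp only [List.getD_cons_succ]
      apply ih hs.of_cons
      rw [List.countP_cons] at hc
      split at hc <;> omega

/-- KEY: pointwise bound on sorted sequences of nested multisets -/
lemma sorted_getD_le_of_le (M N : Multiset ℕ) (h : N ≤ M) (j : ℕ) (hj : j < Multiset.card N) :
    (M.sort (· ≤ ·)).getD j 0 ≤ (N.sort (· ≤ ·)).getD j 0 := by
  set l₁ := M.sort (· ≤ ·) with hl₁
  set l₂ := N.sort (· ≤ ·) with hl₂
  have hj₂ : j < l₂.length := by rw [hl₂, Multiset.length_sort]; exact hj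
  have h2 := sorted_le_countP l₂ (Multiset.pairwise_sort _ _) j hj₂
  set x := l₂.getD j 0 with hx
  have hcle : l₂.countP (fun y => decide (y ≤ x)) ≤ l₁.countP (fun y => decide (y ≤ x)) := by
    have := Multiset.countP_le_of_le (fun y => y ≤ x) h
    rw [← Multiset.sort_eq M (· ≤ ·), ← Multiset.sort_eq N (· ≤ ·)] at this
    rw [Multiset.coe_countP, Multiset.coe_countP] at this
    exact this
  exact countP_sorted_getD_le l₁ (Multiset.pairwise_sort _ _) x j (le_trans h2 hcle)

/-- prefix sums of a sorted multiset are below the sum of any sub-multiset -/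
lemma prefix_sum_le_sub (M : Multiset ℕ) (sel : List ℕ) (h : ↑sel ≤ M) :
    ∑ j ∈ Finset.range sel.length, (M.sort (· ≤ ·)).getD j 0 ≤ sel.sum := by
  have hcard : Multiset.card (↑sel : Multiset ℕ) = sel.length := by simp
  have h1 : ∀ j < sel.length, (M.sort (· ≤ ·)).getD j 0 ≤ ((↑sel : Multiset ℕ).sort (· ≤ ·)).getD j 0 := by
    intro j hj
    exact sorted_getD_le_of_le M _ h j (by simpa using hj)
  calc ∑ j ∈ Finset.range sel.length, (M.sort (· ≤ ·)).getD j 0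
      ≤ ∑ j ∈ Finset.range sel.length, ((↑sel : Multiset ℕ).sort (· ≤ ·)).getD j 0 := by
        apply Finset.sum_le_sum; intro j hj; exact h1 j (Finset.mem_range.mp hj)
    _ = ((↑sel : Multiset ℕ).sort (· ≤ ·)).sum := by
        have : ((↑sel : Multiset ℕ).sort (· ≤ ·)).length = sel.length := by simp
        rw [← this, sum_getD]
    _ = sel.sum := by
        have : ↑(((↑sel : Multiset ℕ).sort (· ≤ ·))) = (↑sel : Multiset ℕ) := Multiset.sort_eq _ _
        calc ((↑sel : Multiset ℕ).sort (· ≤ ·)).sum = ((↑(((↑sel : Multiset ℕ).sort (· ≤ ·))) : Multiset ℕ)).sum := by simp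
          _ = ((↑sel : Multiset ℕ)).sum := by rw [this]
          _ = sel.sum := by simp

/-- gap lemma for strictly sorted lists -/
lemma sorted_lt_getD_gap (l : List ℕ) (hs : l.Pairwise (· < ·)) (r k : ℕ) (h : r + k < l.length) :
    l.getD r 0 + k ≤ l.getD (r + k) 0 := by
  induction k with
  | zero => simp
  | succ k ih =>
    have h1 : r + k < l.length := by omega
    have h2 := ih (by omega)
    have hlt : l.getD (r + k) 0 < l.getD (r + k + 1) 0 := by
      have e1 : l.getD (r+k) 0 = l.get ⟨r+k, h1⟩ := by
        rw [List.getD_eq_getElem?_getD, List.getElem?_eq_getElem h1]; rfl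
      have h1' : r + k + 1 < l.length := by omega
      have e2 : l.getD (r+k+1) 0 = l.get ⟨r+k+1, h1'⟩ := by
        rw [List.getD_eq_getElem?_getD, List.getElem?_eq_getElem h1']; rfl
      rw [e1, e2]
      exact List.Pairwise.rel_get_of_lt hs (by simp)
    show l.getD r 0 + (k+1) ≤ l.getD (r+k+1) 0
    omega

/-- getD monotone on a (≤)-sorted list -/
lemma sorted_le_getD_mono (l : List ℕ) (hs : l.Pairwise (· ≤ ·)) (i j : ℕ) (hij : i ≤ j)
    (hj : j < l.length) : l.getD i 0 ≤ l.getD j 0 := by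
  rcases eq_or_lt_of_le hij with rfl | hlt
  · exact le_refl _
  · have hi : i < l.length := by omega
    have e1 : l.getD i 0 = l.get ⟨i, hi⟩ := by
      rw [List.getD_eq_getElem?_getD, List.getElem?_eq_getElem hi]; rfl
    have e2 : l.getD j 0 = l.get ⟨j, hj⟩ := by
      rw [List.getD_eq_getElem?_getD, List.getElem?_eq_getElem hj]; rfl
    rw [e1, e2]
    exact List.Pairwise.rel_get_of_lt hs (by simpa using hlt)



/-- parametric root word: `rwB b 1 = [!b]`, `rwB b i = b (!b)^(i-2) b` for `i ≥ 2`. -/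
def rwB (b : Bool) (i : ℕ) : List Bool :=
  if i = 1 then [!b] else b :: (List.replicate (i - 2) (!b) ++ [b])

lemma length_rwB (b : Bool) (i : ℕ) (hi : 1 ≤ i) : (rwB b i).length = i := by
  unfold rwB
  split
  · rename_i h; simp [h]
  · simp; omega

lemma reverse_rwB (b : Bool) (i : ℕ) : (rwB b i).reverse = rwB b i := by
  unfold rwB
  split
  · simp
  · simp [List.reverse_cons, List.reverse_append, List.reverse_replicate]

lemma rwB_ne_nil (b : Bool) (i : ℕ) : rwB b i ≠ [] := by
  unfold rwB; split <;> simp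

lemma rwB_ne_single (b : Bool) (i : ℕ) : rwB b i ≠ [b] := by
  unfold rwB
  split
  · simp
  · intro h
    have := congrArg List.length h
    simp at this

lemma prefix_of_append_of_length_le {α : Type*} {u v w : List α} (h : u <+: v ++ w)
    (hl : u.length ≤ v.length) : u <+: v := by
  have h1 := List.prefix_iff_eq_take.mp h
  rw [List.take_append_of_le_length hl] at h1
  rw [h1]
  exact List.take_prefix _ _

lemma prefix_comparable {α : Type*} {u v w : List α} (hu : u <+: w) (hv : v <+: w)
    (hl : u.length ≤ v.length) : u <+: v := by
  have h1 := List.prefix_iff_eq_take.mp hu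
  have h2 := List.prefix_iff_eq_take.mp hv
  rw [h1, h2]
  exact List.take_prefix_take_left hl

lemma bool_ne_not (b : Bool) : b ≠ !b := by cases b <;> simp

lemma rwB_prefix_rwB (b : Bool) (i j : ℕ) (hi : 1 ≤ i) (hj : 1 ≤ j)
    (h : rwB b i <+: rwB b j) : i = j := by
  by_cases hi1 : i = 1
  · by_cases hj1 : j = 1
    · omega
    · exfalso
      unfold rwB at h
      rw [if_pos hi1, if_neg hj1] at h
      rw [List.cons_prefix_cons] at h
      exact bool_ne_not b h.1.symm
  · by_cases hj1 : j = 1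
    · exfalso
      have h1 := h.length_le
      rw [length_rwB b i hi, length_rwB b j hj] at h1
      omega
    · by_contra hne
      have hlen := h.length_le
      rw [length_rwB b i hi, length_rwB b j hj] at hlen
      unfold rwB at h
      rw [if_neg hi1, if_neg hj1, List.cons_prefix_cons] at h
      have h2 : List.replicate (i-2) (!b) ++ [b] <+: List.replicate (j-2) (!b) := by
        apply prefix_of_append_of_length_le h.2
        simp; omega
      have hb : b ∈ List.replicate (i-2) (!b) ++ [b] := by simp
      have h3 := h2.subset hb
      have h4 := List.eq_of_mem_replicate h3
      exact bool_ne_not b h4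

/-- index of the unique root word that is a prefix of `w` -/
def fIdx (b : Bool) (w : List Bool) : ℕ :=
  if w.head? = some b then 2 + (w.tail.takeWhile (fun x => x != b)).length else 1

lemma fIdx_pos (b : Bool) (w : List Bool) : 1 ≤ fIdx b w := by
  unfold fIdx; split <;> omega

lemma palin_getLast? (w : List Bool) (h : w.reverse = w) : w.getLast? = w.head? := by
  have h1 := List.head?_reverse (l := w)
  rw [h] at h1
  exact h1.symm

lemma getLast?_cons_ne_nil {α : Type*} (x : α) (t : List α) (ht : t ≠ []) :
    (x :: t).getLast? = t.getLast? := by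
  cases t with
  | nil => exact absurd rfl ht
  | cons y ts => exact List.getLast?_cons_cons

/-- last element of a nonempty palindrome `b :: t` (with `t ≠ []`) : `b ∈ t`. -/
lemma palin_tail_mem (b : Bool) (t : List Bool) (hpal : (b :: t).reverse = b :: t)
    (ht : t ≠ []) : b ∈ t := by
  have h1 := palin_getLast? _ hpal
  rw [List.head?_cons, getLast?_cons_ne_nil b t ht] at h1
  rw [List.getLast?_eq_getLast ht] at h1
  have h2 := List.getLast_mem ht
  rwa [Option.some_inj.mp h1] at h2

lemma rwB_fIdx_prefix (b : Bool) (w : List Bool) (hpal : w.reverse = w) (hne : w ≠ [])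
    (hnb : w ≠ [b]) : rwB b (fIdx b w) <+: w := by
  obtain ⟨x, t, rfl⟩ := List.exists_cons_of_ne_nil hne
  by_cases hx : x = b
  · rw [hx] at hpal hnb ⊢
    have ht : t ≠ [] := by intro h; exact hnb (by rw [h])
    have hbmem : b ∈ t := palin_tail_mem b t hpal ht
    set p : Bool → Bool := fun x => x != b with hp
    have hdrop : t.dropWhile p ≠ [] := by
      intro hcon
      rw [List.dropWhile_eq_nil_iff] at hcon
      have := hcon b hbmem
      simp [hp] at this
    have hhead : (t.dropWhile p).head hdrop = b := by
      have h5 := List.head_dropWhile_not p hdrop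
      simp [hp] at h5
      exact h5
    have htake : t.takeWhile p = List.replicate (t.takeWhile p).length (!b) := by
      apply List.eq_replicate_of_mem
      intro y hy
      have h6 := List.mem_takeWhile_imp hy
      simp [hp] at h6
      cases y <;> cases b <;> simp_all
    have hfIdx : fIdx b (b :: t) = 2 + (t.takeWhile p).length := by
      unfold fIdx
      rw [if_pos (by simp)]
      simp [hp]
    rw [hfIdx]
    unfold rwB
    rw [if_neg (by omega)]
    rw [List.cons_prefix_cons]
    refine ⟨rfl, ?_⟩
    have hsplit : t = List.replicate (t.takeWhile p).length (!b) ++ (b :: (t.dropWhile p).tail) := by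
      conv_lhs => rw [← (List.takeWhile_append_dropWhile : t.takeWhile p ++ t.dropWhile p = t)]
      rw [← htake]
      congr 1
      rw [← hhead]
      exact (List.cons_head_tail hdrop).symm
    have he : (2 + (t.takeWhile p).length) - 2 = (t.takeWhile p).length := by omega
    rw [he]
    conv_rhs => rw [hsplit]
    rw [List.prefix_append_right_inj]
    rw [List.cons_prefix_cons]
    exact ⟨rfl, List.nil_prefix⟩
  · have hfIdx : fIdx b (x :: t) = 1 := by
      unfold fIdx
      rw [if_neg (by simp [hx])]
    rw [hfIdx]
    unfold rwB
    rw [if_pos rfl]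
    rw [List.cons_prefix_cons]
    constructor
    · cases x <;> cases b <;> simp_all
    · exact List.nil_prefix

lemma fIdx_unique (b : Bool) (w : List Bool) (hpal : w.reverse = w) (hne : w ≠ [])
    (hnb : w ≠ [b]) (j : ℕ) (hj : 1 ≤ j) (h : rwB b j <+: w) : j = fIdx b w := by
  have h2 := rwB_fIdx_prefix b w hpal hne hnb
  rcases le_total (rwB b j).length (rwB b (fIdx b w)).length with hl | hl
  · exact rwB_prefix_rwB b j (fIdx b w) hj (fIdx_pos b w) (prefix_comparable h h2 hl)
  · exact (rwB_prefix_rwB b (fIdx b w) j (fIdx_pos b w) hj (prefix_comparable h2 h hl)).symm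

/-- a nonempty palindrome (≠ [b]) that is a prefix of a root word equals it -/
lemma palin_prefix_rwB (b : Bool) (u : List Bool) (j : ℕ) (hj : 1 ≤ j)
    (hpal : u.reverse = u) (hne : u ≠ []) (hnb : u ≠ [b]) (h : u <+: rwB b j) :
    u = rwB b j := by
  apply h.eq_of_length
  rw [length_rwB b j hj]
  by_cases hj1 : j = 1
  · have h1 := h.length_le
    rw [length_rwB b j hj] at h1
    have h2 : u.length ≠ 0 := by simpa using hne
    omega
  · obtain ⟨x, t, rfl⟩ := List.exists_cons_of_ne_nil hne
    unfold rwB at h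
    rw [if_neg hj1, List.cons_prefix_cons] at h
    obtain ⟨hxb, h2⟩ := h
    rw [hxb] at hpal hnb
    have ht : t ≠ [] := by intro hcon; exact hnb (by rw [hcon])
    have hbmem : b ∈ t := palin_tail_mem b t hpal ht
    have hlen := h2.length_le
    simp at hlen
    by_contra hcon
    have hlt : t.length ≤ j - 2 := by
      simp at hcon ⊢
      omega
    have h3 : t <+: List.replicate (j-2) (!b) :=
      prefix_of_append_of_length_le h2 (by simp; omega)
    have h4 := List.eq_of_mem_replicate (h3.subset hbmem)
    exact bool_ne_not b h4


lemma lenSeq_length (C : Finset (List Bool)) : (lenSeq C).length = C.card := by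
  unfold lenSeq
  rw [Multiset.length_sort, Multiset.card_map]
  rfl

lemma lenSeq_sorted (C : Finset (List Bool)) : (lenSeq C).Pairwise (· ≤ ·) :=
  Multiset.pairwise_sort _ _

/-- an enumeration of `C` sorted by length -/
lemma exists_sorted_list (C : Finset (List Bool)) :
    ∃ L : List (List Bool), L.Nodup ∧ (∀ w, w ∈ L ↔ w ∈ C) ∧ L.length = C.card ∧
      L.map List.length = lenSeq C := by
  classical
  set le : List Bool → List Bool → Bool := fun u w => Nat.ble u.length w.length with hle
  set L := C.toList.mergeSort le with hL
  have hperm : L.Perm C.toList := List.mergeSort_perm _ _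
  have hnodup : L.Nodup := hperm.nodup_iff.mpr (Finset.nodup_toList C)
  have hmem : ∀ w, w ∈ L ↔ w ∈ C := by
    intro w
    rw [hperm.mem_iff, Finset.mem_toList]
  have hlen : L.length = C.card := by
    rw [hperm.length_eq, Finset.length_toList]
  have hsorted : (L.map List.length).Pairwise (· ≤ ·) := by
    have h1 := List.pairwise_mergeSort (le := le)
      (fun a b c hab hbc => by
        simp only [hle, Nat.ble_eq] at hab hbc ⊢; omega)
      (fun a b => by simp only [hle, Bool.or_eq_true, Nat.ble_eq]; omega)
      C.toList
    rw [← hL] at h1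
    rw [List.pairwise_map]
    apply h1.imp
    intro a b hab
    simpa [hle, Nat.ble_eq] using hab
  refine ⟨L, hnodup, hmem, hlen, ?_⟩
  apply List.Perm.eq_of_pairwise' hsorted (lenSeq_sorted C)
  rw [← Multiset.coe_eq_coe]
  show ((L.map List.length : List ℕ) : Multiset ℕ) = _
  unfold lenSeq
  rw [Multiset.sort_eq]
  rw [← Multiset.map_coe]
  congr 1
  rw [← Finset.coe_toList C]
  exact Multiset.coe_eq_coe.mpr hperm

/-- THE CORE CONSTRUCTION -/
lemma core (C : Finset (List Bool)) (hsff : IsSFF C) (n : ℕ) (hn : C.card = n)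
    (b : Bool) (hb : ([b] : List Bool) ∉ C) (hnil : ([] : List Bool) ∉ C)
    (m : ℕ) (hm : m < n) :
    ∃ W : Finset (List Bool), IsSFF W ∧ W.card = n ∧
      ∀ i ≤ n, ∑ j ∈ Finset.range i, nthLen W j ≤
        (∑ j ∈ Finset.range (min i m), nthLen C j) + ∑ r ∈ Finset.range (i - m), (m + 1 + r) := by
  classical
  obtain ⟨L, hLnodup, hLmem, hLlen, hLmap⟩ := exists_sorted_list C
  have hLlen' : L.length = n := by rw [hLlen, hn]
  -- the m shortest codewords
  have hDnodup : (↑(L.take m) : Multiset (List Bool)).Nodup := by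
    rw [Multiset.coe_nodup]
    exact hLnodup.sublist (List.take_sublist m L)
  set D : Finset (List Bool) := ⟨↑(L.take m), hDnodup⟩ with hD
  have hDmem : ∀ w, w ∈ D ↔ w ∈ L.take m := by
    intro w; rw [hD]; simp [Finset.mem_mk, Multiset.mem_coe]
  have hDsub : ∀ w ∈ D, w ∈ C := by
    intro w hw
    rw [hDmem] at hw
    exact (hLmem w).mp (List.mem_of_mem_take hw)
  have hDcard : D.card = m := by
    rw [hD, Finset.card_mk, Multiset.coe_card, List.length_take, hLlen']
    omega
  -- properties of codewords
  have hCw : ∀ w ∈ C, Palin w ∧ w ≠ [] ∧ w ≠ [b] := by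
    intro w hw
    refine ⟨hsff.1 w hw, ?_, ?_⟩
    · intro h; rw [h] at hw; exact hnil hw
    · intro h; rw [h] at hw; exact hb hw
  -- blocked indices
  set F : Finset ℕ := D.image (fIdx b) with hF
  have hFcard : F.card ≤ m := le_trans (Finset.card_image_le) (le_of_eq hDcard)
  set A : Finset ℕ := (Finset.Icc 1 n) \ F with hA
  have hAcard : n - m ≤ A.card := by
    have h1 := Finset.le_card_sdiff F (Finset.Icc 1 n)
    rw [Nat.card_Icc] at h1
    rw [← hA] at h1
    omega
  obtain ⟨J, hJA, hJcard⟩ := Finset.exists_subset_card_eq hAcard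
  have hJprops : ∀ j ∈ J, 1 ≤ j ∧ j ≤ n ∧ j ∉ F := by
    intro j hj
    have h1 := hJA hj
    rw [hA, Finset.mem_sdiff, Finset.mem_Icc] at h1
    exact ⟨h1.1.1, h1.1.2, h1.2⟩
  -- no root word with index in J is a prefix of a word of D
  have hKB : ∀ w ∈ D, ∀ j ∈ J, ¬ (rwB b j <+: w) := by
    intro w hw j hj hpre
    obtain ⟨hpal, hne, hnb⟩ := hCw w (hDsub w hw)
    have := fIdx_unique b w hpal hne hnb j (hJprops j hj).1 hpre
    apply (hJprops j hj).2.2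
    rw [hF, this]
    exact Finset.mem_image_of_mem _ hw
  have hdisj : Disjoint D (J.image (rwB b)) := by
    rw [Finset.disjoint_right]
    intro x hx hxD
    rw [Finset.mem_image] at hx
    obtain ⟨j, hj, rfl⟩ := hx
    exact hKB _ hxD j hj (List.prefix_refl _)
  set W : Finset (List Bool) := D.disjUnion (J.image (rwB b)) hdisj with hW
  have hWmem : ∀ w, w ∈ W ↔ w ∈ D ∨ ∃ j ∈ J, rwB b j = w := by
    intro w
    rw [hW, Finset.mem_disjUnion, Finset.mem_image]
  have hrwinj : Set.InjOn (rwB b) ↑J := by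
    intro j hj j' hj' heq
    have h1 := length_rwB b j (hJprops j hj).1
    have h2 := length_rwB b j' (hJprops j' hj').1
    rw [← h1, ← h2, heq]
  have hWcard : W.card = n := by
    rw [hW, Finset.card_disjUnion, hDcard, Finset.card_image_of_injOn hrwinj, hJcard]
    omega
  have hWsff : IsSFF W := by
    constructor
    · intro w hw
      rcases (hWmem w).mp hw with hwD | ⟨j, hj, rfl⟩
      · exact hsff.1 w (hDsub w hwD)
      · exact reverse_rwB b j
    · intro u hu w hw hpre
      rcases (hWmem u).mp hu with huD | ⟨j, hj, rfl⟩
      · rcases (hWmem w).mp hw with hwD | ⟨j', hj', rfl⟩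
        · exact hsff.2 u (hDsub u huD) w (hDsub w hwD) hpre
        · obtain ⟨hpal, hne, hnb⟩ := hCw u (hDsub u huD)
          exact palin_prefix_rwB b u j' (hJprops j' hj').1 hpal hne hnb hpre
      · rcases (hWmem w).mp hw with hwD | ⟨j', hj', rfl⟩
        · exact absurd hpre (hKB w hwD j hj)
        · rw [rwB_prefix_rwB b j j' (hJprops j hj).1 (hJprops j' hj').1 hpre]
  -- length multiset of W
  have hJid : J.val.map (fun j => (rwB b j).length) = J.val.map id := by
    apply Multiset.map_congr rfl
    intro j hj
    exact length_rwB b j (hJprops j hj).1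
  have hWlenval : W.val.map List.length = ↑((L.take m).map List.length) + J.val := by
    rw [hW]
    show (D.val + (J.image (rwB b)).val).map List.length = _
    rw [Multiset.map_add]
    have e1 : Multiset.map List.length D.val = (↑((L.take m).map List.length) : Multiset ℕ) := by
      show ((↑(L.take m) : Multiset (List Bool))).map List.length = _
      rw [Multiset.map_coe]
    have hnodupmap : (Multiset.map (rwB b) J.val).Nodup := by
      apply Multiset.Nodup.map_on
      · intro j hj j' hj' heq
        exact hrwinj (by simpa using hj) (by simpa using hj') heq
      · exact J.nodup
    have e2 : Multiset.map List.length (Finset.image (rwB b) J).val = J.val := by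
      rw [Finset.image_val, Multiset.dedup_eq_self.mpr hnodupmap, Multiset.map_map]
      show J.val.map (fun j => (rwB b j).length) = J.val
      rw [hJid, Multiset.map_id]
    rw [e1, e2]
  -- lenSeq W is the sort of that multiset
  have hlenSeqW : lenSeq W = (W.val.map List.length).sort (· ≤ ·) := rfl
  -- main estimates
  refine ⟨W, hWsff, hWcard, ?_⟩
  intro i hi
  by_cases him : i ≤ m
  · -- easy case
    rw [min_eq_left him]
    have hsel : (↑((L.take i).map List.length) : Multiset ℕ) ≤ W.val.map List.length := by
      rw [hWlenval]
      apply le_trans ?_ (Multiset.le_add_right _ _)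
      apply Multiset.coe_le.mpr
      apply List.Sublist.subperm
      apply List.Sublist.map
      rw [show L.take i = (L.take m).take i by rw [List.take_take, min_eq_left him]]
      exact List.take_sublist _ _
    have hlen1 : ((L.take i).map List.length).length = i := by
      simp [List.length_take]; omega
    have h1 := prefix_sum_le_sub (W.val.map List.length) ((L.take i).map List.length) hsel
    rw [hlen1] at h1
    have h2 : ((L.take i).map List.length).sum = ∑ j ∈ Finset.range i, nthLen C j := by
      rw [List.map_take, hLmap]
      rw [← sum_getD_take (lenSeq C) i (by rw [lenSeq_length, hn]; omega)]
      rfl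
    have h3 : i - m = 0 := by omega
    rw [h3]
    simp only [Finset.range_zero, Finset.sum_empty, add_zero]
    calc ∑ j ∈ Finset.range i, nthLen W j ≤ ((L.take i).map List.length).sum := h1
      _ = ∑ j ∈ Finset.range i, nthLen C j := h2
  · -- hard case : i > m
    push_neg at him
    rw [min_eq_right (le_of_lt him)]
    set k := i - m with hk
    set Js := J.sort (· ≤ ·) with hJs
    have hJslen : Js.length = n - m := by rw [hJs, Finset.length_sort, hJcard]
    have hkJs : k ≤ Js.length := by rw [hJslen]; omega
    set sel : List ℕ := ((L.take m).map List.length) ++ (Js.take k) with hsel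
    have hselle : (↑sel : Multiset ℕ) ≤ W.val.map List.length := by
      rw [hWlenval, hsel]
      rw [show ((((L.take m).map List.length) ++ (Js.take k) : List ℕ) : Multiset ℕ)
          = ↑((L.take m).map List.length) + ↑(Js.take k) from rfl]
      apply add_le_add_right
      have h1 : (↑(Js.take k) : Multiset ℕ) ≤ ↑Js :=
        Multiset.coe_le.mpr (List.Sublist.subperm (List.take_sublist _ _))
      rw [hJs] at h1 ⊢
      rwa [Finset.sort_eq] at h1
    have hsellen : sel.length = i := by
      rw [hsel]
      simp [List.length_take, hLlen']
      omega
    have h1 := prefix_sum_le_sub (W.val.map List.length) sel hselle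
    rw [hsellen] at h1
    -- evaluate sel.sum
    have h2 : ((L.take m).map List.length).sum = ∑ j ∈ Finset.range m, nthLen C j := by
      rw [List.map_take, hLmap]
      rw [← sum_getD_take (lenSeq C) m (by rw [lenSeq_length, hn]; omega)]
      rfl
    -- Js is strictly sorted with entries ≤ n
    have hJsst : Js.Pairwise (· < ·) :=
      (Finset.sortedLT_sort J).pairwise
    have hJsmem : ∀ r, r < Js.length → Js.getD r 0 ∈ J := by
      intro r hr
      have : Js.getD r 0 = Js[r] := by
        rw [List.getD_eq_getElem?_getD, List.getElem?_eq_getElem hr]; rfl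
      rw [this]
      rw [← Finset.mem_sort (α := ℕ) (· ≤ ·)]
      exact List.getElem_mem hr
    have hJsbound : ∀ r, r < k → Js.getD r 0 ≤ m + 1 + r := by
      intro r hr
      have hr' : r < Js.length := by omega
      have hlpos : 0 < Js.length := by omega
      have hgap := sorted_lt_getD_gap Js hJsst r (Js.length - 1 - r) (by omega)
      rw [show r + (Js.length - 1 - r) = Js.length - 1 by omega] at hgap
      have hlast : Js.getD (Js.length - 1) 0 ≤ n := by
        have := hJsmem (Js.length - 1) (by omega)
        exact ((hJprops _ this).2.1)
      have hkk : k ≤ n - m := by rw [← hJslen]; exact hkJs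
      omega
    have h3 : (Js.take k).sum ≤ ∑ r ∈ Finset.range k, (m + 1 + r) := by
      rw [← sum_getD_take Js k hkJs]
      apply Finset.sum_le_sum
      intro r hr
      exact hJsbound r (Finset.mem_range.mp hr)
    have h4 : sel.sum = ((L.take m).map List.length).sum + (Js.take k).sum := by
      rw [hsel, List.sum_append]
    calc ∑ j ∈ Finset.range i, nthLen W j ≤ sel.sum := h1
      _ = ((L.take m).map List.length).sum + (Js.take k).sum := h4
      _ ≤ (∑ j ∈ Finset.range m, nthLen C j) + ∑ r ∈ Finset.range k, (m + 1 + r) := by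
          rw [h2]; exact add_le_add_right h3 _

end SFFAux


namespace SFFAux2

/-- Abel summation identity -/
lemma abel_id (p u : ℕ → ℝ) (n : ℕ) :
    ∑ i ∈ Finset.range (n+1), p i * u i
      = p n * (∑ j ∈ Finset.range (n+1), u j)
        + ∑ i ∈ Finset.range n, (p i - p (i+1)) * (∑ j ∈ Finset.range (i+1), u j) := by
  induction n with
  | zero => simp
  | succ n ih =>
    rw [Finset.sum_range_succ (f := fun i => p i * u i), ih]
    rw [Finset.sum_range_succ (f := fun i => (p i - p (i+1)) * (∑ j ∈ Finset.range (i+1), u j))]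
    rw [Finset.sum_range_succ (f := fun j => u j) (n+1)]
    ring

/-- Abel comparison: dominated prefix sums with strict total gives strict expected length -/
lemma abel_compare (p : ℕ → ℝ) (a c : ℕ → ℕ) (n : ℕ) (hn : 1 ≤ n)
    (hanti : ∀ i j, i < n → j < n → i ≤ j → p j ≤ p i)
    (hpos : 0 < p (n-1))
    (hdom : ∀ i < n, (∑ j ∈ Finset.range i, c j) ≤ (∑ j ∈ Finset.range i, a j))
    (hstrict : (∑ j ∈ Finset.range n, c j) < (∑ j ∈ Finset.range n, a j)) :
    ∑ i ∈ Finset.range n, p i * (c i : ℝ) < ∑ i ∈ Finset.range n, p i * (a i : ℝ) := by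
  obtain ⟨N, rfl⟩ : ∃ N, n = N + 1 := ⟨n - 1, by omega⟩
  rw [abel_id p (fun i => (c i : ℝ)) N, abel_id p (fun i => (a i : ℝ)) N]
  have hNn : N = N + 1 - 1 := by omega
  apply add_lt_add_of_lt_of_le
  · apply mul_lt_mul_of_pos_left ?_ (by rw [hNn]; exact hpos)
    have : ((∑ j ∈ Finset.range (N+1), c j : ℕ) : ℝ) < ((∑ j ∈ Finset.range (N+1), a j : ℕ) : ℝ) := by
      exact_mod_cast hstrict
    push_cast at this
    exact this
  · apply Finset.sum_le_sum
    intro i hi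
    rw [Finset.mem_range] at hi
    apply mul_le_mul_of_nonneg_left
    · have h1 := hdom (i+1) (by omega)
      have : ((∑ j ∈ Finset.range (i+1), c j : ℕ) : ℝ) ≤ ((∑ j ∈ Finset.range (i+1), a j : ℕ) : ℝ) := by
        exact_mod_cast h1
      push_cast at this
      exact this
    · have := hanti i (i+1) (by omega) (by omega) (by omega)
      linarith

/-- Gauss sum -/
lemma gauss_sum (n : ℕ) : ∑ i ∈ Finset.range n, (i+1) = n*(n+1)/2 := by
  have h : 2 * (∑ i ∈ Finset.range n, (i+1)) = n*(n+1) := by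
    induction n with
    | zero => simp
    | succ n ih =>
      rw [Finset.sum_range_succ, Nat.mul_add, ih]
      ring
  omega

/-- splitting the triangular sum -/
lemma tri_split (m k : ℕ) :
    (∑ j ∈ Finset.range m, (j+1)) + (∑ r ∈ Finset.range k, (m+1+r)) = ∑ j ∈ Finset.range (m+k), (j+1) := by
  induction k with
  | zero => simp
  | succ k ih =>
    rw [Finset.sum_range_succ (f := fun r => m+1+r), show m + (k+1) = (m+k)+1 from rfl,
      Finset.sum_range_succ (f := fun j => j+1), ← ih]
    ring

end SFFAux2

namespace SFFAux

lemma nthLen_mono (C : Finset (List Bool)) (i j : ℕ) (hij : i ≤ j) (hj : j < C.card) :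
    nthLen C i ≤ nthLen C j :=
  sorted_le_getD_mono _ (lenSeq_sorted C) i j hij (by rw [lenSeq_length]; exact hj)

lemma nthLen_le_of_all (C : Finset (List Bool)) (K : ℕ) (hall : ∀ w ∈ C, w.length ≤ K)
    (i : ℕ) : nthLen C i ≤ K := by
  unfold nthLen
  by_cases hi : i < (lenSeq C).length
  · have hmem : (lenSeq C).getD i 0 ∈ lenSeq C := by
      rw [List.getD_eq_getElem?_getD, List.getElem?_eq_getElem hi]
      exact List.getElem_mem hi
    have : (lenSeq C).getD i 0 ∈ (C.val.map List.length) := by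
      have h2 : ((lenSeq C : List ℕ) : Multiset ℕ) = C.val.map List.length :=
        Multiset.sort_eq _ _
      rw [← h2]
      exact Multiset.mem_coe.mpr hmem
    rw [Multiset.mem_map] at this
    obtain ⟨w, hw, hweq⟩ := this
    rw [← hweq]
    exact hall w hw
  · push_neg at hi
    rw [List.getD_eq_getElem?_getD, List.getElem?_eq_none (by omega)]
    simp

lemma sum_nthLen_eq (C : Finset (List Bool)) :
    ∑ i ∈ Finset.range C.card, nthLen C i = ∑ w ∈ C, w.length := by
  unfold nthLen
  rw [← lenSeq_length C, sum_getD]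
  show (lenSeq C).sum = _
  have h2 : ((lenSeq C : List ℕ) : Multiset ℕ) = C.val.map List.length :=
    Multiset.sort_eq _ _
  calc (lenSeq C).sum = ((lenSeq C : List ℕ) : Multiset ℕ).sum := by simp
    _ = (C.val.map List.length).sum := by rw [h2]
    _ = ∑ w ∈ C, w.length := rfl

lemma eq_singleton_nil (C : Finset (List Bool)) (hsff : IsSFF C) (h : ([] : List Bool) ∈ C) :
    C = {([] : List Bool)} := by
  rw [Finset.eq_singleton_iff_unique_mem]
  exact ⟨h, fun w hw => (hsff.2 [] h w hw (List.nil_prefix)).symm⟩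

lemma eq_pair_bits (C : Finset (List Bool)) (hsff : IsSFF C) (hnil : ([] : List Bool) ∉ C)
    (hf : [false] ∈ C) (ht : [true] ∈ C) : C = {[false], [true]} := by
  apply Finset.Subset.antisymm
  · intro w hw
    have hwne : w ≠ [] := by intro hcon; rw [hcon] at hw; exact hnil hw
    obtain ⟨x, t, rfl⟩ := List.exists_cons_of_ne_nil hwne
    have hx : [x] ∈ C := by cases x; exact hf; exact ht
    have := hsff.2 [x] hx (x :: t) hw ⟨t, rfl⟩
    rw [← this]
    cases x <;> simp
  · intro w hw
    rcases Finset.mem_insert.mp hw with rfl | hw2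
    · exact hf
    · rw [Finset.mem_singleton.mp hw2]; exact ht

end SFFAux

open SFFAux SFFAux2

/-- If `C` is an optimal binary symmetric fix-free code with `n`
codewords and sorted nondecreasing length sequence `(l_1, …, l_n)`, then
`l_i ≤ n` for every `i` and `Σ_i l_i ≤ n(n+1)/2`. -/
theorem optimal_length_bounds (n : ℕ) (C : Finset (List Bool)) (h : IsOptimal n C) :
    (∀ i < n, nthLen C i ≤ n) ∧
      ∑ i ∈ Finset.range n, nthLen C i ≤ n * (n + 1) / 2 := by
  classical
  obtain ⟨hsff, hcard, p, hp, hopt⟩ := h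
  by_contra hcon
  have hviol : (n*(n+1)/2 < ∑ i ∈ Finset.range n, nthLen C i) ∨ (∃ i < n, n < nthLen C i) := by
    rcases not_and_or.mp hcon with h1 | h2
    · right; push_neg at h1; exact h1
    · left; omega
  have hn1 : 1 ≤ n := by
    by_contra h0
    have hn0 : n = 0 := by omega
    have := hp.2.2
    rw [hn0] at this
    simp at this
  -- case [] ∈ C
  by_cases hnil : ([] : List Bool) ∈ C
  · have hC1 := eq_singleton_nil C hsff hnil
    have hzero : ∀ i, nthLen C i ≤ 0 := by
      apply nthLen_le_of_all
      intro w hw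
      rw [hC1, Finset.mem_singleton] at hw
      simp [hw]
    rcases hviol with h1 | ⟨i, hi, h2⟩
    · have : ∀ i ∈ Finset.range n, nthLen C i = 0 := fun i _ => by have := hzero i; omega
      rw [Finset.sum_congr rfl this] at h1
      simp at h1
    · have := hzero i; omega
  -- choose the bit b
  have hbit : ∃ b : Bool, ([b] : List Bool) ∉ C := by
    by_cases ht : [true] ∈ C
    · by_cases hf : [false] ∈ C
      · exfalso
        have hC2 := eq_pair_bits C hsff hnil hf ht
        have hone : ∀ i, nthLen C i ≤ 1 := by
          apply nthLen_le_of_all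
          intro w hw
          rw [hC2] at hw
          rcases Finset.mem_insert.mp hw with rfl | hw2
          · simp
          · rw [Finset.mem_singleton.mp hw2]; simp
        have hn2 : n = 2 := by
          rw [← hcard, hC2]
          rfl
        have hsum : ∑ i ∈ Finset.range n, nthLen C i = 2 := by
          rw [← hcard, sum_nthLen_eq, hC2]
          rw [Finset.sum_pair (by simp)]
          rfl
        rcases hviol with h1 | ⟨i, hi, h2⟩
        · rw [hsum, hn2] at h1
          norm_num at h1
        · have := hone i
          omega
      · exact ⟨false, hf⟩
    · exact ⟨true, ht⟩
  obtain ⟨b, hb⟩ := hbit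
  -- notation
  by_cases htot : (∑ j ∈ Finset.range n, (j+1)) < ∑ j ∈ Finset.range n, nthLen C j
  · -- total sum too large
    have hP0 : (∑ j ∈ Finset.range 0, nthLen C j) ≤ ∑ j ∈ Finset.range 0, (j+1) := by simp
    set m := Nat.findGreatest
      (fun i => (∑ j ∈ Finset.range i, nthLen C j) ≤ ∑ j ∈ Finset.range i, (j+1)) n with hmdef
    have hPm : (∑ j ∈ Finset.range m, nthLen C j) ≤ ∑ j ∈ Finset.range m, (j+1) :=
      Nat.findGreatest_spec
        (P := fun i => (∑ j ∈ Finset.range i, nthLen C j) ≤ ∑ j ∈ Finset.range i, (j+1))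
        (Nat.zero_le n) hP0
    have hmn : m < n := by
      have h1 : m ≤ n := Nat.findGreatest_le n
      by_cases hmeq : m = n
      · rw [hmeq] at hPm; omega
      · omega
    obtain ⟨W, hWsff, hWcard, hWbnd⟩ := core C hsff n hcard b hb hnil m hmn
    have hdom : ∀ i < n, (∑ j ∈ Finset.range i, nthLen W j) ≤ ∑ j ∈ Finset.range i, nthLen C j := by
      intro i hi
      by_cases him : i ≤ m
      · have := hWbnd i (by omega)
        rw [min_eq_left him, show i - m = 0 by omega] at this
        simpa using this
      · push_neg at him
        have h1 := hWbnd i (by omega)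
        rw [min_eq_right (le_of_lt him)] at h1
        have h2 : (∑ j ∈ Finset.range m, nthLen C j) + ∑ r ∈ Finset.range (i-m), (m+1+r)
            ≤ ∑ j ∈ Finset.range i, (j+1) := by
          have h3 : (∑ j ∈ Finset.range m, (j+1)) + ∑ r ∈ Finset.range (i-m), (m+1+r)
              = ∑ j ∈ Finset.range i, (j+1) := by
            rw [tri_split m (i-m), show m + (i-m) = i by omega]
          omega
        have h4 : ¬ ((∑ j ∈ Finset.range i, nthLen C j) ≤ ∑ j ∈ Finset.range i, (j+1)) :=
          Nat.findGreatest_is_greatest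
            (P := fun i => (∑ j ∈ Finset.range i, nthLen C j) ≤ ∑ j ∈ Finset.range i, (j+1))
            (n := n) (k := i) (by omega) (by omega)
        push_neg at h4
        omega
    have hstrict : (∑ j ∈ Finset.range n, nthLen W j) < ∑ j ∈ Finset.range n, nthLen C j := by
      have h1 := hWbnd n (le_refl n)
      rw [min_eq_right (by omega)] at h1
      have h3 : (∑ j ∈ Finset.range m, (j+1)) + ∑ r ∈ Finset.range (n-m), (m+1+r)
          = ∑ j ∈ Finset.range n, (j+1) := by
        rw [tri_split m (n-m), show m + (n-m) = n by omega]
      omega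
    have := abel_compare p (nthLen C) (nthLen W) n hn1 hp.1 (hp.2.1 (n-1) (by omega)) hdom hstrict
    have hle := hopt W hWsff hWcard
    unfold expLen at hle
    linarith
  · -- a length exceeds n
    have hlenviol : ∃ i < n, n < nthLen C i := by
      rcases hviol with h1 | h2
      · exfalso
        rw [gauss_sum n] at htot
        omega
      · exact h2
    obtain ⟨i0, hi0, hgt⟩ := hlenviol
    have hmn : n - 1 < n := by omega
    obtain ⟨W, hWsff, hWcard, hWbnd⟩ := core C hsff n hcard b hb hnil (n-1) hmn
    have hdom : ∀ i < n, (∑ j ∈ Finset.range i, nthLen W j) ≤ ∑ j ∈ Finset.range i, nthLen C j := by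
      intro i hi
      have := hWbnd i (by omega)
      rw [min_eq_left (by omega), show i - (n-1) = 0 by omega] at this
      simpa using this
    have hstrict : (∑ j ∈ Finset.range n, nthLen W j) < ∑ j ∈ Finset.range n, nthLen C j := by
      have h1 := hWbnd n (le_refl n)
      rw [min_eq_right (by omega), show n - (n-1) = 1 by omega] at h1
      have h2 : ∑ r ∈ Finset.range 1, ((n-1)+1+r) = n := by simp; omega
      rw [h2] at h1
      have h3 : ∑ j ∈ Finset.range n, nthLen C j
          = (∑ j ∈ Finset.range (n-1), nthLen C j) + nthLen C (n-1) := by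
        rw [show n = (n-1)+1 by omega, Finset.sum_range_succ]
        rw [show (n-1)+1-1 = n-1 by omega]
      have h4 : n < nthLen C (n-1) := by
        have := nthLen_mono C i0 (n-1) (by omega) (by omega)
        omega
      omega
    have := abel_compare p (nthLen C) (nthLen W) n hn1 hp.1 (hp.2.1 (n-1) (by omega)) hdom hstrict
    have hle := hopt W hWsff hWcard
    unfold expLen at hle
    linarith
end

section
/- There exists a constant c > 0 such that for every sufficiently large even n there is a code B_n ∈ S_n with the following property: every sequence R_n = S⁰ → S¹ → … → Sᵐ = B_n of codes in S_n in which, for each i ∈ {0, 1, …, m−1}, every codeword of B_n has a prefix in Sⁱ, satisfies m ≥ c · n^{3/2}. -/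
namespace ATLB

/-- `Wd p t = (p 1)^t p` -/
def Wd (p : List Bool) : ℕ → List Bool
  | 0 => p
  | t+1 => p ++ true :: Wd p t

lemma Wd_swap (p : List Bool) (t : ℕ) : Wd p t ++ true :: p = p ++ true :: Wd p t := by
  induction t with
  | zero => rfl
  | succ t ih =>
      show (p ++ true :: Wd p t) ++ true :: p = p ++ true :: (p ++ true :: Wd p t)
      rw [List.append_assoc, List.cons_append, ih]

lemma Wd_succ' (p : List Bool) (t : ℕ) : Wd p (t+1) = Wd p t ++ true :: p :=
  (Wd_swap p t).symm

lemma Wd_length (p : List Bool) (t : ℕ) : (Wd p t).length = t * (p.length + 1) + p.length := by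
  induction t with
  | zero => simp [Wd]
  | succ t ih => simp [Wd, ih]; ring

lemma Wd_palin {p : List Bool} (hp : Palin p) (t : ℕ) : Palin (Wd p t) := by
  induction t with
  | zero => exact hp
  | succ t ih =>
      show (p ++ true :: Wd p t).reverse = _
      rw [List.reverse_append, List.reverse_cons, ih, hp]
      rw [List.append_assoc, List.singleton_append, ← Wd_succ']

lemma Wd_prefix (p : List Bool) {t t' : ℕ} (h : t ≤ t') : Wd p t <+: Wd p t' := by
  induction t' with
  | zero => simp [Nat.le_zero.mp h]
  | succ t' ih =>
      rcases Nat.lt_or_ge t (t'+1) with h' | h'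
      · exact (ih (by omega)).trans (by rw [Wd_succ']; exact List.prefix_append _ _)
      · have : t = t' + 1 := by omega
        simp [this]

lemma Wd_head (q : List Bool) (t : ℕ) : ∃ z, Wd (false :: q) t = false :: z := by
  cases t with
  | zero => exact ⟨q, rfl⟩
  | succ t => exact ⟨q ++ true :: Wd (false :: q) t, rfl⟩


/-- The seed palindrome attached to index `k`: `0 τ τᴿ 0` with `τ` the first `r` bits of `k`. -/
def pal (r k : ℕ) : List Bool :=
  false :: ((List.range r).map k.testBit ++ ((List.range r).map k.testBit).reverse ++ [false])

lemma pal_length (r k : ℕ) : (pal r k).length = 2 * r + 2 := by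
  simp [pal]; ring

lemma pal_palin (r k : ℕ) : Palin (pal r k) := by
  show _ = _
  simp [pal, List.reverse_append]

lemma pal_head (r k : ℕ) : ∃ q, pal r k = false :: q := ⟨_, rfl⟩

lemma pal_inj {r k k' : ℕ} (hk : k < 2 ^ r) (hk' : k' < 2 ^ r)
    (h : pal r k = pal r k') : k = k' := by
  have hT : (List.range r).map k.testBit = (List.range r).map k'.testBit := by
    have h2 := List.cons.inj h
    have h3 := congrArg (List.take r) h2.2
    rw [List.append_assoc, List.append_assoc] at h3
    rwa [List.take_left' (by simp), List.take_left' (by simp)] at h3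
  apply Nat.eq_of_testBit_eq
  intro i
  rcases Nat.lt_or_ge i r with hi | hi
  · have h1 : ((List.range r).map k.testBit)[i]? = ((List.range r).map k'.testBit)[i]? := by
      rw [hT]
    simpa [List.getElem?_map, List.getElem?_range, hi] using h1
  · rw [Nat.testBit_lt_two_pow (lt_of_lt_of_le hk (Nat.pow_le_pow_right (by norm_num) hi)),
      Nat.testBit_lt_two_pow (lt_of_lt_of_le hk' (Nat.pow_le_pow_right (by norm_num) hi))]

lemma take_of_prefix {u w : List Bool} (h : u <+: w) : w.take u.length = u :=
  (List.prefix_iff_eq_take.mp h).symm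

lemma prefix_unique {u v w : List Bool} (hu : u <+: w) (hv : v <+: w)
    (hlen : u.length = v.length) : u = v :=
  (List.prefix_of_prefix_length_le hu hv hlen.le).eq_of_length hlen

lemma sq_le_two_pow {r : ℕ} (hr : 6 ≤ r) : (r+1) * (r+1) ≤ 2 ^ r := by
  induction r, hr using Nat.le_induction with
  | base => norm_num
  | succ r hr ih =>
      have : 2 ^ (r+1) = 2 * 2 ^ r := by ring
      rw [this]
      nlinarith

end ATLB


/-- There is a constant `c > 0` such that for every sufficiently
large even `n` there is a code `B_n ∈ S_n` such that every sequence
`R_n = S⁰ → S¹ → ⋯ → Sᵐ = B_n` of codes in `S_n`, in which at every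
intermediate stage every codeword of `B_n` has a prefix in `Sⁱ`, satisfies
`m ≥ c · n^{3/2}`. -/
theorem arrow_transform_lower_bound :
    ∃ c : ℝ, 0 < c ∧ ∃ N : ℕ, ∀ n : ℕ, N ≤ n → Even n →
      ∃ B ∈ SCodes n, ∀ (m : ℕ) (S : ℕ → Finset (List Bool)),
        (S 0 = rootCode n ∧ S m = B ∧ (∀ i ≤ m, S i ∈ SCodes n) ∧
          (∀ i < m, ∃ σ, ArrowTo n σ (S i) (S (i + 1))) ∧
          (∀ i < m, ∀ w ∈ B, ∃ u ∈ S i, u <+: w)) →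
        c * (n : ℝ) ^ ((3 : ℝ) / 2) ≤ (m : ℝ) := by
  classical
  refine ⟨1/8, by norm_num, 10000, ?_⟩
  intro n hn _hev
  set r := Nat.sqrt n with hrdef
  have hr : 100 ≤ r := Nat.le_sqrt.mpr (by omega)
  have hrn : r * r ≤ n := by have := Nat.sqrt_le' n; rwa [pow_two] at this
  have hnr : n < (r+1) * (r+1) := by have := Nat.lt_succ_sqrt' n; rwa [pow_two] at this
  set s := 2 * r + 2 with hsdef
  set l := r / 4 with hldef
  have h4l : 4 * l ≤ r := by omega
  have hl1 : 25 ≤ l := by omega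
  have hn2r : n ≤ 2 ^ r := le_trans hnr.le (ATLB.sq_le_two_pow (by omega))
  set L := l * (s+1) + s with hLdef
  have hLn : L ≤ n := by
    have h1 : 4 * (l * (s+1)) ≤ r * (s+1) := by
      calc 4 * (l * (s+1)) = (4*l) * (s+1) := by ring
        _ ≤ r * (s+1) := Nat.mul_le_mul_right _ h4l
    have h2 : r * (s+1) = 2*(r*r) + 3*r := by rw [hsdef]; ring
    have h3 : 12 * r ≤ r * r := Nat.mul_le_mul_right r (by omega)
    omega
  set pk : ℕ → List Bool := fun k => ATLB.pal r k with hpkdef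
  set wk : ℕ → List Bool := fun k => ATLB.Wd (pk k) l with hwkdef
  have hpklen : ∀ k, (pk k).length = s := fun k => ATLB.pal_length r k
  have hWtlen : ∀ k t, (ATLB.Wd (pk k) t).length = t * (s+1) + s := by
    intro k t; rw [ATLB.Wd_length, hpklen]
  have hwklen : ∀ k, (wk k).length = L := fun k => hWtlen k l
  have hWtpal : ∀ k t, Palin (ATLB.Wd (pk k) t) := fun k t => ATLB.Wd_palin (ATLB.pal_palin r k) t
  have hWt_pre : ∀ k t, t ≤ l → ATLB.Wd (pk k) t <+: wk k := fun k t ht => ATLB.Wd_prefix _ ht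
  have hpk_pre : ∀ k, pk k <+: wk k := fun k => hWt_pre k 0 (by omega)
  have htake : ∀ k, (wk k).take s = pk k := by
    intro k; have := ATLB.take_of_prefix (hpk_pre k); rwa [hpklen] at this
  have hwk_inj : ∀ k < n, ∀ k' < n, wk k = wk k' → k = k' := by
    intro k hk k' hk' h
    have : pk k = pk k' := by rw [← htake k, ← htake k', h]
    exact ATLB.pal_inj (lt_of_lt_of_le hk hn2r) (lt_of_lt_of_le hk' hn2r) this
  set B : Finset (List Bool) := (Finset.range n).image wk with hBdef
  have hmemB : ∀ x ∈ B, ∃ k < n, wk k = x := by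
    intro x hx
    obtain ⟨k, hk, rfl⟩ := Finset.mem_image.mp hx
    exact ⟨k, Finset.mem_range.mp hk, rfl⟩
  have hBS : B ∈ SCodes n := by
    refine ⟨⟨?_, ?_⟩, ?_, ?_, ?_⟩
    · intro x hx; obtain ⟨k, _, rfl⟩ := hmemB x hx; exact hWtpal k l
    · intro u hu x hx hpre
      obtain ⟨k, _, rfl⟩ := hmemB u hu
      obtain ⟨k', _, rfl⟩ := hmemB x hx
      exact hpre.eq_of_length (by rw [hwklen, hwklen])
    · rw [hBdef, Finset.card_image_of_injOn, Finset.card_range]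
      intro k hk k' hk' h
      exact hwk_inj k (Finset.mem_range.mp hk) k' (Finset.mem_range.mp hk') h
    · intro h
      obtain ⟨k, _, hk⟩ := hmemB _ h
      have := congrArg List.length hk
      rw [hwklen] at this
      simp only [List.length_singleton] at this
      have : s ≤ L := by omega
      omega
    · intro x hx; obtain ⟨k, _, rfl⟩ := hmemB x hx; rw [hwklen]; exact hLn
  refine ⟨B, hBS, ?_⟩
  intro m S ⟨hS0, hSm, hmem, harrow, _hprefix⟩
  -- reduce to the counting bound
  suffices hm : n * l ≤ m by
    have hn0 : (0:ℝ) < n := by exact_mod_cast (by omega : 0 < n)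
    have hsq : Real.sqrt n ≤ (r:ℝ) + 1 := by
      have h1 : (n:ℝ) ≤ ((r:ℝ)+1)^2 := by
        have := (Nat.cast_le (α := ℝ)).mpr hnr.le
        push_cast at this ⊢; nlinarith
      calc Real.sqrt n ≤ Real.sqrt (((r:ℝ)+1)^2) := Real.sqrt_le_sqrt h1
        _ = (r:ℝ)+1 := Real.sqrt_sq (by positivity)
    have hrl : (r:ℝ) + 1 ≤ 8 * l := by
      have : r + 1 ≤ 8 * l := by omega
      exact_mod_cast this
    have hmR : (n:ℝ) * l ≤ m := by exact_mod_cast hm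
    have key2 : (n:ℝ) ^ ((3:ℝ)/2) = n * Real.sqrt n := by
      rw [Real.sqrt_eq_rpow, show (3:ℝ)/2 = 1 + 1/2 by norm_num, Real.rpow_add hn0,
        Real.rpow_one]
    rw [key2]
    nlinarith [Real.sqrt_nonneg (n:ℝ), hn0.le, mul_le_mul_of_nonneg_left (hsq.trans hrl) hn0.le]
  -- choose the pivots
  choose sig0 hsig0 using harrow
  obtain ⟨sig, hsig⟩ : ∃ g : ℕ → List Bool, ∀ i (h : i < m), ArrowTo n (g i) (S i) (S (i+1)) :=
    ⟨fun i => if h : i < m then sig0 i h else [], fun i h => by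
      have e : (fun i => if h : i < m then sig0 i h else []) i = sig0 i h := by simp [h]
      rw [e]; exact hsig0 i h⟩
  have huniq : ∀ i, i ≤ m → ∀ u ∈ S i, ∀ v ∈ S i, ∀ w : List Bool, u <+: w → v <+: w → u = v := by
    intro i hi u hu v hv w huw hvw
    rcases le_total u.length v.length with h | h
    · exact (hmem i hi).1.2 u hu v hv (List.prefix_of_prefix_length_le huw hvw h)
    · exact ((hmem i hi).1.2 v hv u hu (List.prefix_of_prefix_length_le hvw huw h)).symm
  set P : ℕ → ℕ → ℕ → Prop :=
    fun k t i => ∃ u ∈ S i, u <+: wk k ∧ s + (t+1) * (s+1) ≤ u.length with hPdef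
  set f : ℕ × ℕ → ℕ := fun q => sInf {i | P q.1 q.2 i} - 1 with hfdef
  have key : ∀ k < n, ∀ t < l, f (k,t) < m ∧ (sig (f (k,t))).take s = pk k ∧
      ATLB.Wd (pk k) (t+1) ∈ S (f (k,t) + 1) := by
    intro k hk t ht
    have hΛL : s + (t+1)*(s+1) ≤ L := by
      have := Nat.mul_le_mul_right (s+1) (show t+1 ≤ l by omega)
      omega
    have hPm : P k t m := by
      refine ⟨wk k, ?_, List.prefix_refl _, by rw [hwklen]; exact hΛL⟩
      rw [hSm, hBdef]
      exact Finset.mem_image_of_mem _ (Finset.mem_range.mpr hk)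
    have hne : {i | P k t i}.Nonempty := ⟨m, hPm⟩
    have hJmem : P k t (sInf {i | P k t i}) := Nat.sInf_mem hne
    have hJle : sInf {i | P k t i} ≤ m := Nat.sInf_le hPm
    have hJ0 : ¬ P k t 0 := by
      rintro ⟨u, huS, hupre, hulen⟩
      rw [hS0] at huS
      obtain ⟨ii, hii, rfl⟩ := Finset.mem_image.mp huS
      by_cases hii1 : ii = 1
      · subst hii1
        simp [rootWord] at hulen
        omega
      · rw [rootWord, if_neg hii1] at hupre
        obtain ⟨q, hq⟩ : ∃ q, pk k = false :: q := ATLB.pal_head r k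
        have hwkc : ∃ z, wk k = false :: z := by
          have e : wk k = ATLB.Wd (false :: q) l := by
            rw [show wk k = ATLB.Wd (pk k) l from rfl, hq]
          rw [e]; exact ATLB.Wd_head q l
        obtain ⟨z, hz⟩ := hwkc
        rw [hz] at hupre
        obtain ⟨tail, htail⟩ := hupre
        simp at htail
    have hJ1 : 1 ≤ sInf {i | P k t i} := by
      rcases Nat.eq_zero_or_pos (sInf {i | P k t i}) with h | h
      · rw [h] at hJmem; exact absurd hJmem hJ0
      · exact h
    have hfj : f (k,t) = sInf {i | P k t i} - 1 := rfl
    set j := sInf {i | P k t i} - 1 with hjdef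
    have hjm : j < m := lt_of_lt_of_le (Nat.sub_lt (by omega) one_pos) hJle
    have hJj : sInf {i | P k t i} = j + 1 := (Nat.succ_pred_eq_of_pos (show 0 < sInf {i | P k t i} by omega)).symm
    have hJnot : ¬ P k t j := Nat.notMem_of_lt_sInf (Nat.sub_lt (show 0 < sInf {i | P k t i} by omega) one_pos)
    rw [hJj] at hJmem
    obtain ⟨v, hvS, hvpre, hvlen⟩ := hJmem
    obtain ⟨hσS, hσall⟩ := hsig j hjm
    obtain ⟨hvmem, hvne⟩ := hσall v hvS
    have hvNb : v ∈ NbhdN n (sig j) := by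
      rcases hvmem with h | h
      · exact absurd ⟨v, h, hvpre, hvlen⟩ hJnot
      · exact h
    obtain ⟨⟨hvpal, hσpal, hσv, hσvne, hmax⟩, hvn⟩ := hvNb
    have hσw : (sig j) <+: wk k := hσv.trans hvpre
    have hπw : pk k <+: wk k := hpk_pre k
    have hprod : 0 < (t+1) * (s+1) := Nat.mul_pos (Nat.succ_pos t) (Nat.succ_pos s)
    have hπv : pk k <+: v := List.prefix_of_prefix_length_le hπw hvpre
      (by rw [hpklen]; exact le_trans (Nat.le_add_right s _) hvlen)
    have hπvne : pk k ≠ v := by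
      intro h; rw [← h, hpklen] at hvlen
      exact absurd hvlen (Nat.not_le.mpr (Nat.lt_add_of_pos_right hprod))
    have hsσ : s ≤ (sig j).length := by
      have := hmax (pk k) (ATLB.pal_palin r k) hπv hπvne
      rwa [hpklen] at this
    have hσlt : (sig j).length < s + (t+1)*(s+1) := by
      by_contra hcon
      push_neg at hcon
      exact hJnot ⟨sig j, hσS, hσw, hcon⟩
    refine ⟨hjm, ?_, ?_⟩
    · have h1 : (sig j).take s <+: wk k := (List.take_prefix s (sig j)).trans hσw
      have h2 : ((sig j).take s).length = s := by
        rw [List.length_take]; omega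
      exact ATLB.prefix_unique h1 hπw (by rw [h2, hpklen])
    · have hWpre : ATLB.Wd (pk k) (t+1) <+: wk k := hWt_pre k (t+1) (by omega)
      have hWlen : (ATLB.Wd (pk k) (t+1)).length = (t+1)*(s+1) + s := hWtlen k (t+1)
      have hvle : v.length ≤ s + (t+1)*(s+1) := by
        by_contra hcon
        push_neg at hcon
        have hWv : ATLB.Wd (pk k) (t+1) <+: v :=
          List.prefix_of_prefix_length_le hWpre hvpre
            (by rw [hWlen, Nat.add_comm]; exact hcon.le)
        have hWvne : ATLB.Wd (pk k) (t+1) ≠ v := by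
          intro h; rw [← h, hWlen] at hcon
          rw [Nat.add_comm] at hcon; exact lt_irrefl _ hcon
        have h5 := hmax _ (hWtpal k (t+1)) hWv hWvne
        rw [hWlen] at h5
        have h6 := lt_of_le_of_lt h5 hσlt
        rw [Nat.add_comm] at h6
        exact lt_irrefl _ h6
      have hveq : v = ATLB.Wd (pk k) (t+1) :=
        ATLB.prefix_unique hvpre hWpre (by rw [hWlen, Nat.add_comm]; exact le_antisymm hvle hvlen)
      rw [← hveq]
      exact hvS
  -- counting
  have hcard := Finset.card_le_card_of_injOn f
    (s := Finset.range n ×ˢ Finset.range l) (t := Finset.range m) ?_ ?_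
  · rwa [Finset.card_product, Finset.card_range, Finset.card_range, Finset.card_range] at hcard
  · intro p hp
    rw [Finset.mem_coe, Finset.mem_product, Finset.mem_range, Finset.mem_range] at hp
    exact Finset.mem_coe.mpr (Finset.mem_range.mpr (key p.1 hp.1 p.2 hp.2).1)
  · rintro ⟨p1, p2⟩ hp ⟨q1, q2⟩ hq hfeq
    simp only [Finset.coe_product, Set.mem_prod, Finset.mem_coe, Finset.mem_range] at hp hq
    obtain ⟨h1, htake1, hW1⟩ := key p1 hp.1 p2 hp.2
    obtain ⟨h2, htake2, hW2⟩ := key q1 hq.1 q2 hq.2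
    have hkk : p1 = q1 := by
      apply ATLB.pal_inj (lt_of_lt_of_le hp.1 hn2r) (lt_of_lt_of_le hq.1 hn2r)
      show pk p1 = pk q1
      rw [← htake1, ← htake2, hfeq]
    have hW2' : ATLB.Wd (pk p1) (q2+1) ∈ S (f (p1,p2) + 1) := by
      rw [hfeq, hkk]; exact hW2
    have hWW : ATLB.Wd (pk p1) (p2+1) = ATLB.Wd (pk p1) (q2+1) :=
      huniq (f (p1,p2) + 1) (by omega) _ hW1 _ hW2' (wk p1)
        (hWt_pre p1 (p2+1) (by omega)) (hWt_pre p1 (q2+1) (by omega))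
    have hlen := congrArg List.length hWW
    rw [hWtlen, hWtlen] at hlen
    have htt : p2 = q2 := by
      have := Nat.eq_of_mul_eq_mul_right (show 0 < s + 1 by omega)
        (by omega : (p2+1)*(s+1) = (q2+1)*(s+1))
      omega
    rw [hkk, htt]
end

section
/- Let C ∈ O_n and suppose R_n = S⁰ ⇒^{π_1} S¹ ⇒^{π_2} S² ⇒^{π_3} … ⇒^{π_m} Sᵐ = C with all Sⁱ ∈ S_n. Then this is a shortest ⇒-transformation from R_n to C if and only if, for every i ∈ {1,…,m}, π_i is a prefix of at least one codeword of C. -/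
namespace SFF6

attribute [local instance] Classical.propDecidable

/-! ### Basic prefix and palindrome lemmas -/

theorem prefix_of_prefix_le {u v w : List Bool} (h1 : u <+: w) (h2 : v <+: w)
    (h : u.length ≤ v.length) : u <+: v := by
  have hu := h1.length_le
  rw [List.prefix_iff_eq_take] at h1 h2 ⊢
  rw [h1, h2, List.take_take, List.length_take]
  congr 1
  omega

theorem prefix_proper_length {u w : List Bool} (h : u <+: w) (hne : u ≠ w) :
    u.length < w.length := by
  rcases lt_or_eq_of_le h.length_le with h' | h'
  · exact h'
  · exact absurd (h.eq_of_length h') hne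

theorem palin_nil : Palin ([] : List Bool) := rfl

theorem palin_single (b : Bool) : Palin [b] := rfl

theorem palin_replicate_false (j : ℕ) : Palin (List.replicate j false) := by
  simp [Palin, List.reverse_replicate]

theorem palin_one_zeros_one (j : ℕ) :
    Palin (true :: (List.replicate j false ++ [true])) := by
  simp [Palin, List.reverse_append, List.reverse_replicate]

theorem not_palin_true_falses (k : ℕ) :
    ¬ Palin (true :: List.replicate (k + 1) false) := by
  intro h
  have := congrArg List.head? h
  rw [List.reverse_cons, List.reverse_replicate, List.replicate_succ] at this
  simp at this

theorem dropWhile_head_not {p : Bool → Bool} :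
    ∀ {l : List Bool} {d : Bool} {d' : List Bool}, l.dropWhile p = d :: d' → p d = false := by
  intro l
  induction l with
  | nil => intro d d' h; simp at h
  | cons a l ih =>
    intro d d' h
    rw [List.dropWhile_cons] at h
    by_cases hp : p a
    · rw [if_pos hp] at h; exact ih h
    · rw [if_neg hp] at h
      injection h with h1 _
      rw [← h1]
      exact Bool.eq_false_iff.mpr hp

/-! ### Root words -/

def IsRoot (w : List Bool) : Prop :=
  w = [false] ∨ ∃ j, w = true :: (List.replicate j false ++ [true])

theorem rootWord_one : rootWord 1 = [false] := by simp [rootWord]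

theorem isRoot_palin {w : List Bool} (h : IsRoot w) : Palin w := by
  rcases h with rfl | ⟨j, rfl⟩
  · exact palin_single false
  · exact palin_one_zeros_one j

theorem isRoot_ne_nil {w : List Bool} (h : IsRoot w) : w ≠ [] := by
  rcases h with rfl | ⟨j, rfl⟩ <;> simp

theorem isRoot_ne_one {w : List Bool} (h : IsRoot w) : w ≠ [true] := by
  rcases h with rfl | ⟨j, rfl⟩
  · simp
  · intro hw
    have := congrArg List.length hw
    simp at this

theorem isRoot_length_pos {w : List Bool} (h : IsRoot w) : 1 ≤ w.length := by
  rcases h with rfl | ⟨j, rfl⟩ <;> simp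

theorem isRoot_rootWord {i : ℕ} (hi : 1 ≤ i) : IsRoot (rootWord i) := by
  rcases Nat.eq_or_lt_of_le hi with h | h
  · left; rw [← h, rootWord_one]
  · right
    refine ⟨i - 2, ?_⟩
    rw [rootWord, if_neg (by omega)]

theorem length_rootWord {i : ℕ} (hi : 1 ≤ i) : (rootWord i).length = i := by
  rcases Nat.eq_or_lt_of_le hi with h | h
  · rw [← h, rootWord_one]; rfl
  · rw [rootWord, if_neg (by omega)]
    simp
    omega

theorem replicate_of_prefix {u : List Bool} {j : ℕ}
    (h : u <+: List.replicate j false) : u = List.replicate u.length false := by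
  apply List.eq_replicate_length.2
  intro b hb
  exact List.eq_of_mem_replicate (h.subset hb)

theorem rootPrefix {w x : List Bool} (hw : IsRoot w) (hx : Palin x)
    (hpre : x <+: w) (hne : x ≠ w) : x = [] ∨ x = [true] := by
  rcases hw with rfl | ⟨j, rfl⟩
  · left
    have hl := prefix_proper_length hpre hne
    have : x.length = 0 := by
      simp only [List.length_cons, List.length_nil] at hl
      omega
    exact List.eq_nil_of_length_eq_zero this
  · rcases x with _ | ⟨a, x'⟩
    · left; rfl
    · right
      obtain ⟨t, ht⟩ := hpre
      cases a
      · exact absurd (List.head_eq_of_cons_eq ht) (by simp)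
      · have hx't : x' ++ t = List.replicate j false ++ [true] :=
          List.tail_eq_of_cons_eq ht
        have hlen : (true :: x').length < (true :: (List.replicate j false ++ [true])).length :=
          prefix_proper_length ⟨t, ht⟩ hne
        simp only [List.length_cons, List.length_append, List.length_replicate,
          List.length_nil] at hlen
        have hx'pre : x' <+: List.replicate j false := by
          apply prefix_of_prefix_le (w := List.replicate j false ++ [true])
          · exact ⟨t, hx't⟩
          · exact List.prefix_append _ _
          · simp only [List.length_replicate]; omega
        have hx'rep := replicate_of_prefix hx'pre
        rcases Nat.eq_zero_or_pos x'.length with h0 | h0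
        · rw [List.eq_nil_of_length_eq_zero h0]
        · exfalso
          have hxx : x'.length - 1 + 1 = x'.length := by omega
          apply not_palin_true_falses (x'.length - 1)
          rw [hxx, ← hx'rep]
          exact hx

theorem takeWhile_false_replicate (l : List Bool) :
    l.takeWhile (fun b => b == false) =
      List.replicate (l.takeWhile (fun b => b == false)).length false := by
  apply List.eq_replicate_length.2
  intro b hb
  have := List.mem_takeWhile_imp hb
  simpa using this

theorem rootChar {w : List Bool} (hw : Palin w) (hnil : w ≠ []) (hone : w ≠ [true])
    (h : ∀ x, Palin x → x <+: w → x ≠ w → x = [] ∨ x = [true]) : IsRoot w := by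
  rcases w with _ | ⟨a, w'⟩
  · exact absurd rfl hnil
  cases a
  · -- starts with false : must be [false]
    left
    by_contra hne
    rcases h [false] (palin_single false) ⟨w', rfl⟩ (fun hh => hne hh.symm) with h' | h'
    · exact nomatch h'
    · injection h' with h1 _
      exact Bool.noConfusion h1
  · -- starts with true
    have hw'ne : w' ≠ [] := by rintro rfl; exact hone rfl
    obtain ⟨k, hk⟩ : ∃ k, w'.takeWhile (fun b => b == false) = List.replicate k false :=
      ⟨_, takeWhile_false_replicate w'⟩
    have hsplit0 : w' = List.replicate k false ++ w'.dropWhile (fun b => b == false) := by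
      rw [← hk]
      exact (List.takeWhile_append_dropWhile (p := fun b => b == false) (l := w')).symm
    rcases hdw : w'.dropWhile (fun b => b == false) with _ | ⟨d, d'⟩
    · exfalso
      rw [hdw, List.append_nil] at hsplit0
      have hk1 : 1 ≤ k := by
        rcases Nat.eq_zero_or_pos k with h0 | h0
        · exfalso; apply hw'ne; rw [hsplit0, h0]; rfl
        · exact h0
      apply not_palin_true_falses (k - 1)
      have hkk : k - 1 + 1 = k := by omega
      rw [hkk, ← hsplit0]
      exact hw
    · have hd : d = true := by
        have := dropWhile_head_not hdw
        simpa using this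
      rw [hdw, hd] at hsplit0
      rcases d' with _ | ⟨e, e'⟩
      · right
        exact ⟨k, by rw [hsplit0]⟩
      · exfalso
        have hq : (true :: (List.replicate k false ++ [true])) <+: (true :: w') := by
          refine ⟨e :: e', ?_⟩
          rw [hsplit0]
          simp
        have hqpal : Palin (true :: (List.replicate k false ++ [true])) :=
          palin_one_zeros_one k
        have hqne : (true :: (List.replicate k false ++ [true])) ≠ (true :: w') := by
          intro hh
          have := congrArg List.length hh
          rw [hsplit0] at this
          simp at this
        rcases h _ hqpal hq hqne with h' | h'
        · exact nomatch h'
        · have := congrArg List.length h'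
          simp at this

end SFF6
namespace SFF6

attribute [local instance] Classical.propDecidable

/-! ### Root code -/

theorem mem_rootCode {n : ℕ} (hn : 1 ≤ n) {w : List Bool} :
    w ∈ rootCode n ↔ IsRoot w ∧ w.length ≤ n := by
  constructor
  · rintro hw
    rw [rootCode, Finset.mem_image] at hw
    obtain ⟨i, hi, rfl⟩ := hw
    rw [Finset.mem_Icc] at hi
    exact ⟨isRoot_rootWord hi.1, by rw [length_rootWord hi.1]; exact hi.2⟩
  · rintro ⟨hr, hlen⟩
    rw [rootCode, Finset.mem_image]
    refine ⟨w.length, ?_, ?_⟩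
    · rw [Finset.mem_Icc]
      exact ⟨isRoot_length_pos hr, hlen⟩
    · rcases hr with rfl | ⟨j, rfl⟩
      · exact rootWord_one
      · rw [rootWord, if_neg (by simp)]
        simp

theorem card_rootCode (n : ℕ) : (rootCode n).card = n := by
  rw [rootCode, Finset.card_image_of_injOn, Nat.card_Icc]
  · omega
  · intro i hi j hj hij
    simp only [Finset.coe_Icc, Set.mem_Icc] at hi hj
    have h1 := length_rootWord hi.1
    have h2 := length_rootWord hj.1
    rw [← h1, ← h2, hij]

/-! ### Neighbourhood basics -/

theorem nbhd_palin {w σ : List Bool} (h : w ∈ Nbhd σ) : Palin w := h.1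

theorem nbhd_palin_base {w σ : List Bool} (h : w ∈ Nbhd σ) : Palin σ := h.2.1

theorem nbhd_prefix {w σ : List Bool} (h : w ∈ Nbhd σ) : σ <+: w := h.2.2.1

theorem nbhd_ne {w σ : List Bool} (h : w ∈ Nbhd σ) : σ ≠ w := h.2.2.2.1

theorem nbhd_max {w σ : List Bool} (h : w ∈ Nbhd σ) :
    ∀ u, Palin u → u <+: w → u ≠ w → u.length ≤ σ.length := h.2.2.2.2

theorem nbhd_lt {w σ : List Bool} (h : w ∈ Nbhd σ) : σ.length < w.length :=
  prefix_proper_length h.2.2.1 h.2.2.2.1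

theorem nbhd_unique {w σ σ' : List Bool} (h : w ∈ Nbhd σ) (h' : w ∈ Nbhd σ') : σ = σ' := by
  have h1 : σ.length ≤ σ'.length := nbhd_max h' σ (nbhd_palin_base h) (nbhd_prefix h) (nbhd_ne h)
  have h2 : σ'.length ≤ σ.length := nbhd_max h σ' (nbhd_palin_base h') (nbhd_prefix h') (nbhd_ne h')
  exact (prefix_of_prefix_le (nbhd_prefix h) (nbhd_prefix h') h1).eq_of_length (le_antisymm h1 h2)

theorem nbhdN_unique {n : ℕ} {w σ σ' : List Bool} (h : w ∈ NbhdN n σ) (h' : w ∈ NbhdN n σ') :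
    σ = σ' := nbhd_unique h.1 h'.1

/-! ### SCodes basics -/

theorem scodes_nil_not_mem {n : ℕ} {S : Finset (List Bool)} (hn : 2 ≤ n) (hS : S ∈ SCodes n) :
    [] ∉ S := by
  intro hmem
  obtain ⟨w, hw, hwne⟩ := Finset.exists_mem_ne (by rw [hS.2.1]; omega) ([] : List Bool)
  exact hwne (hS.1.2 [] hmem w hw List.nil_prefix).symm

/-! ### The palindromic proper prefix set `PFin C` -/

noncomputable def PFin (C : Finset (List Bool)) : Finset (List Bool) :=
  C.biUnion (fun w => (w.inits.toFinset.filter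
    (fun u => Palin u ∧ u ≠ [] ∧ u ≠ [true] ∧ u ≠ w)))

theorem mem_PFin {C : Finset (List Bool)} {u : List Bool} :
    u ∈ PFin C ↔ Palin u ∧ u ≠ [] ∧ u ≠ [true] ∧ ∃ w ∈ C, u <+: w ∧ u ≠ w := by
  rw [PFin, Finset.mem_biUnion]
  constructor
  · rintro ⟨w, hw, hu⟩
    rw [Finset.mem_filter, List.mem_toFinset, List.mem_inits] at hu
    exact ⟨hu.2.1, hu.2.2.1, hu.2.2.2.1, w, hw, hu.1, hu.2.2.2.2⟩
  · rintro ⟨h1, h2, h3, w, hw, h4, h5⟩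
    refine ⟨w, hw, ?_⟩
    rw [Finset.mem_filter, List.mem_toFinset, List.mem_inits]
    exact ⟨h4, h1, h2, h3, h5⟩

theorem PFin_disjoint_self {C : Finset (List Bool)} (hC : IsSFF C) {u : List Bool}
    (hu : u ∈ PFin C) : u ∉ C := by
  intro huC
  obtain ⟨_, _, _, w, hw, hpre, hne⟩ := mem_PFin.1 hu
  exact hne (hC.2 u huC w hw hpre)

theorem PFin_closed {C : Finset (List Bool)} {u x : List Bool} (hu : u ∈ PFin C)
    (hx : Palin x) (hpre : x <+: u) (hne : x ≠ u) (hx0 : x ≠ []) (hx1 : x ≠ [true]) :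
    x ∈ PFin C := by
  obtain ⟨_, _, _, w, hw, hpre', hne'⟩ := mem_PFin.1 hu
  refine mem_PFin.2 ⟨hx, hx0, hx1, w, hw, hpre.trans hpre', ?_⟩
  intro h
  subst h
  have h1 := prefix_proper_length hpre hne
  have h2 := prefix_proper_length hpre' hne'
  omega

/-! ### Longest palindromic proper prefix, and minimal palindromic extensions -/

theorem exists_lpp {w : List Bool} (hw : w ≠ []) :
    ∃ σ, Palin σ ∧ σ <+: w ∧ σ ≠ w ∧
      ∀ x, Palin x → x <+: w → x ≠ w → x.length ≤ σ.length := by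
  classical
  have hne : (w.inits.toFinset.filter (fun x => Palin x ∧ x ≠ w)).Nonempty := by
    refine ⟨[], ?_⟩
    rw [Finset.mem_filter, List.mem_toFinset, List.mem_inits]
    exact ⟨List.nil_prefix, palin_nil, fun h => hw h.symm⟩
  obtain ⟨σ, hσ, hmax⟩ := Finset.exists_max_image _ List.length hne
  rw [Finset.mem_filter, List.mem_toFinset, List.mem_inits] at hσ
  refine ⟨σ, hσ.2.1, hσ.1, hσ.2.2, ?_⟩
  intro x hx1 hx2 hx3
  apply hmax
  rw [Finset.mem_filter, List.mem_toFinset, List.mem_inits]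
  exact ⟨hx2, hx1, hx3⟩

theorem exists_chain_child {u w₀ : List Bool} (hu : Palin u) (hw₀ : Palin w₀)
    (hpre : u <+: w₀) (hne : u ≠ w₀) :
    ∃ c, c ∈ Nbhd u ∧ c <+: w₀ := by
  classical
  have hne' : (w₀.inits.toFinset.filter (fun c => Palin c ∧ u.length < c.length)).Nonempty := by
    refine ⟨w₀, ?_⟩
    rw [Finset.mem_filter, List.mem_toFinset, List.mem_inits]
    exact ⟨List.prefix_refl _, hw₀, prefix_proper_length hpre hne⟩
  obtain ⟨c, hc, hmin⟩ := Finset.exists_min_image _ List.length hne'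
  rw [Finset.mem_filter, List.mem_toFinset, List.mem_inits] at hc
  have hupre : u <+: c := prefix_of_prefix_le hpre hc.1 (le_of_lt hc.2.2)
  refine ⟨c, ⟨hc.2.1, hu, hupre, ?_, ?_⟩, hc.1⟩
  · intro h; rw [h] at hc; omega
  · intro x hx1 hx2 hx3
    by_contra hlen
    push_neg at hlen
    have : c.length ≤ x.length := by
      apply hmin
      rw [Finset.mem_filter, List.mem_toFinset, List.mem_inits]
      exact ⟨hx2.trans hc.1, hx1, hlen⟩
    have := prefix_proper_length hx2 hx3
    omega

/-! ### maxLen -/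

theorem length_le_maxLen {C : Finset (List Bool)} {w : List Bool} (hw : w ∈ C) :
    w.length ≤ maxLen C := Finset.le_sup hw

theorem exists_maxLen {C : Finset (List Bool)} (hC : C.Nonempty) :
    ∃ w ∈ C, w.length = maxLen C := by
  obtain ⟨w, hw, hweq⟩ := Finset.exists_mem_eq_sup C hC List.length
  exact ⟨w, hw, hweq.symm⟩

end SFF6
namespace SFF6

attribute [local instance] Classical.propDecidable

/-! ### Step basics -/

theorem step_removed {n : ℕ} {σ : List Bool} {S T : Finset (List Bool)}
    (h : StepTo n σ S T) : σ ∉ T := fun hσ => (h.1.2 σ hσ).2 rfl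

theorem step_new_mem {n : ℕ} {σ : List Bool} {S T : Finset (List Bool)}
    (h : StepTo n σ S T) {w : List Bool} (hw : w ∈ T) (hwS : w ∉ S) : w ∈ NbhdN n σ := by
  rcases (h.1.2 w hw).1 with h' | h'
  · exact absurd h' hwS
  · exact h'

theorem step_exists_new {n : ℕ} {σ : List Bool} {S T : Finset (List Bool)}
    (h : StepTo n σ S T) (hcard : S.card = n) : ∃ w ∈ T, w ∉ S := by
  by_contra hc
  push_neg at hc
  have hsub : T ⊆ S.erase σ := by
    intro w hw
    exact Finset.mem_erase.2 ⟨(h.1.2 w hw).2, hc w hw⟩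
  have := Finset.card_le_card hsub
  rw [h.2.1, Finset.card_erase_of_mem h.1.1, hcard] at this
  have hn : 1 ≤ n := by
    by_contra hn
    push_neg at hn
    interval_cases n
    have hS' : S = ∅ := Finset.card_eq_zero.1 hcard
    rw [hS'] at h
    exact Finset.notMem_empty σ h.1.1
  omega

theorem step_unique {n : ℕ} {σ σ' : List Bool} {S T : Finset (List Bool)}
    (h : StepTo n σ S T) (h' : StepTo n σ' S T) (hcard : S.card = n) : σ = σ' := by
  obtain ⟨w, hwT, hwS⟩ := step_exists_new h hcard
  exact nbhdN_unique (step_new_mem h hwT hwS) (step_new_mem h' hwT hwS)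

/-! ### Transformation lemmas -/

section Transform

variable {n m : ℕ} {S : ℕ → Finset (List Bool)} {σf : ℕ → List Bool}
variable (hn : 2 ≤ n)
variable (hW : ∀ i < m, StepTo n (σf i) (S i) (S (i + 1)))
variable (hSC : ∀ i ≤ m, S i ∈ SCodes n)
variable (hS0 : S 0 = rootCode n)

theorem exists_entry {w : List Bool} {k : ℕ} (hk : k ≤ m) (hw : w ∈ S k) (h0 : w ∉ S 0) :
    ∃ t, t < k ∧ w ∉ S t ∧ w ∈ S (t + 1) := by
  classical
  have hPt : w ∉ S (Nat.findGreatest (fun t => w ∉ S t) k) :=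
    Nat.findGreatest_spec (P := fun t => w ∉ S t) (Nat.zero_le k) h0
  have htk : Nat.findGreatest (fun t => w ∉ S t) k ≤ k := Nat.findGreatest_le k
  have htlt : Nat.findGreatest (fun t => w ∉ S t) k < k := by
    rcases Nat.lt_or_ge (Nat.findGreatest (fun t => w ∉ S t) k) k with h | h
    · exact h
    · exfalso; apply hPt; have ht : Nat.findGreatest (fun t => w ∉ S t) k = k := le_antisymm htk h
      rw [ht]; exact hw
  refine ⟨Nat.findGreatest (fun t => w ∉ S t) k, htlt, hPt, ?_⟩
  have := Nat.findGreatest_is_greatest (P := fun t => w ∉ S t) (n := k)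
    (lt_add_one (Nat.findGreatest (fun t => w ∉ S t) k)) (by omega)
  exact of_not_not this

include hn hW hSC hS0 in
theorem perm_aux : ∀ L : ℕ, ∀ w : List Bool, w.length = L → ∀ k, k < m → w ∈ S k →
    w ∉ S (k + 1) → ∀ j, k < j → j ≤ m → w ∉ S j := by
  intro L
  induction L using Nat.strong_induction_on with
  | _ L IH =>
    intro w hwL k hkm hwk hwk1 j hkj hjm hwj
    -- take the minimal such j
    have hQ : ∃ j, k < j ∧ j ≤ m ∧ w ∈ S j := ⟨j, hkj, hjm, hwj⟩
    obtain ⟨j₀, hj₀min, hkj₀, hj₀m, hwj₀⟩ :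
        ∃ j₀, (∀ j' < j₀, ¬(k < j' ∧ j' ≤ m ∧ w ∈ S j')) ∧ k < j₀ ∧ j₀ ≤ m ∧ w ∈ S j₀ :=
      ⟨Nat.find hQ, fun j' hj' => Nat.find_min hQ hj', Nat.find_spec hQ⟩
    have hj₀k2 : k + 2 ≤ j₀ := by
      rcases Nat.lt_or_ge j₀ (k + 2) with h | h
      · exfalso
        have : j₀ = k + 1 := by omega
        rw [this] at hwj₀
        exact hwk1 hwj₀
      · exact h
    have hwj₀1 : w ∉ S (j₀ - 1) := by
      intro hcon
      exact hj₀min (j₀ - 1) (by omega) ⟨by omega, by omega, hcon⟩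
    have hstep := hW (j₀ - 1) (by omega)
    have hwj₀' : w ∈ S ((j₀ - 1) + 1) := by
      have : j₀ - 1 + 1 = j₀ := by omega
      rw [this]
      exact hwj₀
    have hwN : w ∈ NbhdN n (σf (j₀ - 1)) := step_new_mem hstep hwj₀' hwj₀1
    have hσmem : σf (j₀ - 1) ∈ S (j₀ - 1) := hstep.1.1
    have hσpal := nbhd_palin_base hwN.1
    have hσpre := nbhd_prefix hwN.1
    have hσne := nbhd_ne hwN.1
    by_cases hw0 : w ∈ S 0
    · -- w is a root word: its palindromic proper prefixes are [] or [true]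
      rw [hS0, mem_rootCode (by omega)] at hw0
      rcases rootPrefix hw0.1 hσpal hσpre hσne with h' | h'
      · exact scodes_nil_not_mem hn (hSC (j₀ - 1) (by omega)) (h' ▸ hσmem)
      · exact (hSC (j₀ - 1) (by omega)).2.2.1 (h' ▸ hσmem)
    · obtain ⟨t, htk, hwt, hwt1⟩ := exists_entry (le_of_lt hkm) hwk hw0
      have hstept := hW t (by omega)
      have hwNt : w ∈ NbhdN n (σf t) := step_new_mem hstept hwt1 hwt
      have hσeq : σf t = σf (j₀ - 1) := nbhdN_unique hwNt hwN
      have hσt : σf t ∈ S t := hstept.1.1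
      have hσt1 : σf t ∉ S (t + 1) := step_removed hstept
      have hlt : (σf t).length < w.length := nbhd_lt hwNt.1
      have := IH (σf t).length (by omega) (σf t) rfl t (by omega) hσt hσt1 (j₀ - 1)
        (by omega) (by omega)
      rw [hσeq] at this
      exact this hσmem

include hn hW hSC hS0 in
theorem perm_lemma {w : List Bool} {k j : ℕ} (hkm : k < m) (hwk : w ∈ S k)
    (hwk1 : w ∉ S (k + 1)) (hkj : k < j) (hjm : j ≤ m) : w ∉ S j :=
  perm_aux hn hW hSC hS0 w.length w rfl k hkm hwk hwk1 j hkj hjm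

include hW hSC hS0 in
theorem expanded_of_prefix : ∀ L : ℕ, ∀ w : List Bool, w.length = L → ∀ t, t ≤ m → w ∈ S t →
    ∀ u, Palin u → u ≠ [] → u ≠ [true] → u <+: w → u ≠ w → ∃ i < m, σf i = u := by
  intro L
  induction L using Nat.strong_induction_on with
  | _ L IH =>
    intro w hwL t htm hwt u hu1 hu2 hu3 hu4 hu5
    have hn1 : 1 ≤ n := by
      have h1 := (hSC t htm).2.1
      have h2 : 0 < (S t).card := Finset.card_pos.2 ⟨w, hwt⟩
      omega
    by_cases hw0 : w ∈ S 0
    · exfalso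
      rw [hS0, mem_rootCode hn1] at hw0
      rcases rootPrefix hw0.1 hu1 hu4 hu5 with h' | h' <;> [exact hu2 h'; exact hu3 h']
    · obtain ⟨t₀, ht₀, hwt₀, hwt₀1⟩ := exists_entry htm hwt hw0
      have hstep := hW t₀ (by omega)
      have hwN : w ∈ NbhdN n (σf t₀) := step_new_mem hstep hwt₀1 hwt₀
      have hσpal := nbhd_palin_base hwN.1
      have hule : u.length ≤ (σf t₀).length := nbhd_max hwN.1 u hu1 hu4 hu5
      by_cases hueq : u = σf t₀
      · exact ⟨t₀, by omega, hueq.symm⟩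
      · have hupre : u <+: σf t₀ := prefix_of_prefix_le hu4 (nbhd_prefix hwN.1) hule
        have hune : u.length < (σf t₀).length := by
          rcases Nat.lt_or_ge u.length (σf t₀).length with h | h
          · exact h
          · exact absurd (hupre.eq_of_length (le_antisymm hule h)) hueq
        have hσmem : σf t₀ ∈ S t₀ := hstep.1.1
        have hσlt : (σf t₀).length < w.length := nbhd_lt hwN.1
        exact IH (σf t₀).length (by omega) (σf t₀) rfl t₀ (by omega) hσmem u hu1 hu2 hu3 hupre
          hueq

include hW hSC hS0 in
theorem card_PFin_le {C : Finset (List Bool)} (hSm : S m = C) : (PFin C).card ≤ m := by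
  classical
  have hstep : ∀ u ∈ PFin C, ∃ i < m, σf i = u := by
    intro u hu
    obtain ⟨h1, h2, h3, w, hw, h4, h5⟩ := mem_PFin.1 hu
    exact expanded_of_prefix hW hSC hS0 w.length w rfl m le_rfl (hSm ▸ hw) u h1 h2 h3 h4 h5
  have key : (PFin C).card ≤ (Finset.range m).card := by
    apply Finset.card_le_card_of_injOn (fun u => if h : ∃ i < m, σf i = u then Nat.find h else 0)
    · intro u hu
      simp only [dif_pos (hstep u hu)]
      exact Finset.mem_range.2 (Nat.find_spec (hstep u hu)).1
    · intro u hu u' hu' heq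
      have hu1 := hstep u (Finset.mem_coe.1 hu)
      have hu2 := hstep u' (Finset.mem_coe.1 hu')
      simp only [dif_pos hu1, dif_pos hu2] at heq
      have h1 := (Nat.find_spec hu1).2
      have h2 := (Nat.find_spec hu2).2
      rw [← h1, ← h2, heq]
  rw [Finset.card_range] at key
  exact key

end Transform

end SFF6
namespace SFF6

attribute [local instance] Classical.propDecidable

/-! ### Order statistics of sorted lists -/

theorem sorted_count_ge {l : List ℕ} (hs : l.Pairwise (· ≤ ·)) {i : ℕ} (hi : i < l.length)
    {j : ℕ} (hij : l.getD i 0 ≤ j) :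
    i + 1 ≤ l.countP (fun x => decide (x ≤ j)) := by
  have hsub : (l.take (i + 1)).Sublist l := List.take_sublist _ _
  have h1 : (l.take (i + 1)).countP (fun x => decide (x ≤ j)) ≤
      l.countP (fun x => decide (x ≤ j)) := hsub.countP_le
  have h2 : (l.take (i + 1)).countP (fun x => decide (x ≤ j)) = (l.take (i + 1)).length := by
    rw [List.countP_eq_length]
    intro a ha
    obtain ⟨k, hk, hak⟩ := List.mem_iff_getElem.1 ha
    rw [List.length_take] at hk
    have hk' : k < l.length := by omega
    have hgt : (l.take (i + 1))[k] = l[k] := List.getElem_take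
    have hle : l[k] ≤ l[i] := by
      rcases Nat.lt_or_ge k i with h | h
      · exact List.pairwise_iff_getElem.1 hs k i hk' hi h
      · have : k = i := by omega
        subst this
        exact le_refl _
    rw [← hak, hgt]
    simp only [decide_eq_true_eq]
    calc l[k] ≤ l[i] := hle
      _ = l.getD i 0 := (List.getD_eq_getElem l 0 hi).symm
      _ ≤ j := hij
  rw [h2, List.length_take] at h1
  omega

theorem sorted_le_of_count {l : List ℕ} (hs : l.Pairwise (· ≤ ·)) {i j : ℕ} (hi : i < l.length)
    (hc : i + 1 ≤ l.countP (fun x => decide (x ≤ j))) : l.getD i 0 ≤ j := by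
  by_contra hcon
  push_neg at hcon
  rw [List.getD_eq_getElem l 0 hi] at hcon
  have hsplit : l.countP (fun x => decide (x ≤ j)) =
      (l.take i).countP (fun x => decide (x ≤ j)) +
      (l.drop i).countP (fun x => decide (x ≤ j)) := by
    rw [← List.countP_append, List.take_append_drop]
  have hdrop : (l.drop i).countP (fun x => decide (x ≤ j)) = 0 := by
    rw [List.countP_eq_zero]
    intro a ha
    obtain ⟨k, hk, hak⟩ := List.mem_iff_getElem.1 ha
    rw [List.length_drop] at hk
    have hgt : (l.drop i)[k] = l[i + k] := List.getElem_drop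
    have hle : l[i] ≤ l[i + k] := by
      rcases Nat.eq_zero_or_pos k with h0 | h0
      · subst h0; simp
      · exact List.pairwise_iff_getElem.1 hs i (i + k) hi (by omega) (by omega)
    rw [← hak, hgt]
    simp only [decide_eq_true_eq]
    omega
  have htake : (l.take i).countP (fun x => decide (x ≤ j)) ≤ i := by
    calc (l.take i).countP (fun x => decide (x ≤ j)) ≤ (l.take i).length :=
          List.countP_le_length
      _ ≤ i := by rw [List.length_take]; omega
  omega

/-! ### lenSeq basics -/

theorem lenSeq_sorted (C : Finset (List Bool)) : (lenSeq C).Pairwise (· ≤ ·) :=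
  Multiset.pairwise_sort _ _

theorem lenSeq_length (C : Finset (List Bool)) : (lenSeq C).length = C.card := by
  rw [lenSeq, Multiset.length_sort, Multiset.card_map]
  rfl

theorem lenSeq_coe (C : Finset (List Bool)) :
    (lenSeq C : Multiset ℕ) = C.val.map List.length := Multiset.sort_eq _ _

theorem lenSeq_countP (C : Finset (List Bool)) (j : ℕ) :
    (lenSeq C).countP (fun x => decide (x ≤ j)) =
      Multiset.countP (fun x => x ≤ j) (C.val.map List.length) := by
  rw [← lenSeq_coe]
  exact (Multiset.coe_countP (fun x => x ≤ j) (lenSeq C)).symm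

theorem map_length_erase {M : Multiset (List Bool)} {a : List Bool} (h : a ∈ M) :
    (M.erase a).map List.length = (M.map List.length).erase a.length := by
  have h1 : M.map List.length = a.length ::ₘ (M.erase a).map List.length := by
    conv_lhs => rw [← Multiset.cons_erase h]
    rw [Multiset.map_cons]
  rw [h1, Multiset.erase_cons_head]

/-! ### The optimality swap bound -/

theorem junk_bound {n : ℕ} {C : Finset (List Bool)} (hn : 2 ≤ n) (hopt : InOpt n C)
    (hCS : C ∈ SCodes n) {v : List Bool} (hvp : Palin v) (hv0 : v ≠ []) (hv1 : v ≠ [true])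
    (hanc : ∀ x, Palin x → x <+: v → x ≠ v → x = [] ∨ x = [true] ∨ x ∈ PFin C)
    (hvC : v ∉ C) (hvP : v ∉ PFin C) : maxLen C ≤ v.length := by
  by_contra hlen
  push_neg at hlen
  have hCcard : C.card = n := hCS.2.1
  have hCne : C.Nonempty := Finset.card_pos.1 (by omega)
  obtain ⟨wmax, hwmaxC, hwmaxlen⟩ := exists_maxLen hCne
  have hvne : v ∉ C.erase wmax := fun h => hvC (Finset.mem_of_mem_erase h)
  set C' := insert v (C.erase wmax) with hC'
  have hC'card : C'.card = n := by
    rw [hC', Finset.card_insert_of_notMem hvne, Finset.card_erase_of_mem hwmaxC, hCcard]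
    omega
  -- C' is an SFF code
  have hC'SFF : IsSFF C' := by
    constructor
    · intro w hw
      rw [hC', Finset.mem_insert] at hw
      rcases hw with rfl | hw
      · exact hvp
      · exact hCS.1.1 w (Finset.mem_of_mem_erase hw)
    · intro u hu w hw hpre
      rw [hC', Finset.mem_insert] at hu hw
      rcases hu with rfl | hu <;> rcases hw with rfl | hw
      · rfl
      · -- u = v, w ∈ C
        by_contra hne
        exact hvP (mem_PFin.2 ⟨hvp, hv0, hv1, w, Finset.mem_of_mem_erase hw, hpre, hne⟩)
      · -- u ∈ C, w = v
        by_contra hne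
        have huC := Finset.mem_of_mem_erase hu
        rcases hanc u (hCS.1.1 u huC) hpre hne with h' | h' | h'
        · exact scodes_nil_not_mem hn hCS (h' ▸ huC)
        · exact hCS.2.2.1 (h' ▸ huC)
        · exact PFin_disjoint_self hCS.1 h' huC
      · exact hCS.1.2 u (Finset.mem_of_mem_erase hu) w (Finset.mem_of_mem_erase hw) hpre
  obtain ⟨q, hq, hmin⟩ := hopt.1.2.2
  have hle : expLen q n C ≤ expLen q n C' := hmin C' hC'SFF hC'card
  -- multiset identity
  have hLmem : maxLen C ∈ C.val.map List.length :=
    Multiset.mem_map.2 ⟨wmax, hwmaxC, hwmaxlen⟩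
  have hMval : C'.val = v ::ₘ (C.erase wmax).val := by
    rw [hC', Finset.insert_val, Multiset.ndinsert_of_notMem hvne]
  have hM' : C'.val.map List.length = v.length ::ₘ (C.val.map List.length).erase (maxLen C) := by
    rw [hMval, Multiset.map_cons]
    congr 1
    rw [Finset.erase_val]
    rw [← hwmaxlen]
    exact map_length_erase hwmaxC
  -- count comparison
  have hcount : ∀ j, Multiset.countP (fun x => x ≤ j) (C.val.map List.length) ≤
      Multiset.countP (fun x => x ≤ j) (C'.val.map List.length) := by
    intro j
    rw [hM', Multiset.countP_cons]
    conv_lhs => rw [← Multiset.cons_erase hLmem]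
    rw [Multiset.countP_cons]
    by_cases hj : maxLen C ≤ j
    · rw [if_pos hj, if_pos (by omega)]
    · rw [if_neg hj]
      omega
  -- pointwise inequality of sorted sequences
  have hpoint : ∀ i < n, nthLen C' i ≤ nthLen C i := by
    intro i hi
    have hilen : i < (lenSeq C).length := by rw [lenSeq_length, hCcard]; exact hi
    have hilen' : i < (lenSeq C').length := by rw [lenSeq_length, hC'card]; exact hi
    have h1 : i + 1 ≤ (lenSeq C).countP (fun x => decide (x ≤ nthLen C i)) :=
      sorted_count_ge (lenSeq_sorted C) hilen (le_refl _)
    rw [lenSeq_countP] at h1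
    have h2 := le_trans h1 (hcount (nthLen C i))
    rw [← lenSeq_countP] at h2
    exact sorted_le_of_count (lenSeq_sorted C') hilen' h2
  -- strictness somewhere
  have hstrict : ∃ i < n, nthLen C' i < nthLen C i := by
    by_contra hcon
    push_neg at hcon
    have hall : ∀ i < n, nthLen C' i = nthLen C i := fun i hi =>
      le_antisymm (hpoint i hi) (hcon i hi)
    have hseq : lenSeq C' = lenSeq C := by
      apply List.ext_getElem
      · rw [lenSeq_length, lenSeq_length, hCcard, hC'card]
      · intro i h1 h2
        have hi : i < n := by rw [lenSeq_length, hC'card] at h1; exact h1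
        have := hall i hi
        rw [nthLen, nthLen, List.getD_eq_getElem _ 0 h1, List.getD_eq_getElem _ 0 h2] at this
        exact this
    have hMeq : C'.val.map List.length = C.val.map List.length := by
      rw [← lenSeq_coe, ← lenSeq_coe, hseq]
    have hcnt := congrArg (Multiset.count (maxLen C)) hMeq
    rw [hM', Multiset.count_cons, if_neg (by omega)] at hcnt
    have h1 : Multiset.count (maxLen C) ((C.val.map List.length).erase (maxLen C)) =
        Multiset.count (maxLen C) (C.val.map List.length) - 1 :=
      Multiset.count_erase_self _ _
    have h2 : 1 ≤ Multiset.count (maxLen C) (C.val.map List.length) :=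
      Multiset.one_le_count_iff_mem.2 hLmem
    omega
  -- strict expected length inequality
  obtain ⟨i₀, hi₀, hi₀lt⟩ := hstrict
  have hexp : expLen q n C' < expLen q n C := by
    rw [expLen, expLen]
    apply Finset.sum_lt_sum
    · intro i hi
      rw [Finset.mem_range] at hi
      have := hpoint i hi
      have hq0 : 0 ≤ q i := le_of_lt (hq.2.1 i hi)
      exact mul_le_mul_of_nonneg_left (Nat.cast_le.2 this) hq0
    · refine ⟨i₀, Finset.mem_range.2 hi₀, ?_⟩
      exact mul_lt_mul_of_pos_left (Nat.cast_lt.2 hi₀lt) (hq.2.1 i₀ hi₀)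
  have := lt_of_le_of_lt hle hexp
  exact lt_irrefl _ this

end SFF6
namespace SFF6

attribute [local instance] Classical.propDecidable

/-! ### The key order -/

section Order

variable (C : Finset (List Bool))

noncomputable def Dset : Finset (List Bool) := C ∪ PFin C

noncomputable def flag (w : List Bool) : ℕ := if w ∈ Dset C then 0 else 1

noncomputable def klt (x y : List Bool) : Prop :=
  x.length < y.length ∨ (x.length = y.length ∧ (flag C x < flag C y ∨
    (flag C x = flag C y ∧ Encodable.encode x < Encodable.encode y)))

noncomputable def kle (x y : List Bool) : Prop := klt C x y ∨ x = y

variable {C}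

theorem klt_irrefl {x : List Bool} : ¬ klt C x x := by
  rw [klt]; omega

theorem klt_trans {x y z : List Bool} (h1 : klt C x y) (h2 : klt C y z) : klt C x z := by
  rw [klt] at *
  omega

theorem klt_length_le {x y : List Bool} (h : klt C x y) : x.length ≤ y.length := by
  rw [klt] at h; omega

theorem klt_of_length_lt {x y : List Bool} (h : x.length < y.length) : klt C x y := Or.inl h

theorem klt_trichotomy (x y : List Bool) : klt C x y ∨ x = y ∨ klt C y x := by
  rcases Nat.lt_trichotomy x.length y.length with h | h | h
  · exact Or.inl (Or.inl h)
  · rcases Nat.lt_trichotomy (flag C x) (flag C y) with h' | h' | h'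
    · exact Or.inl (Or.inr ⟨h, Or.inl h'⟩)
    · rcases Nat.lt_trichotomy (Encodable.encode x) (Encodable.encode y) with h'' | h'' | h''
      · exact Or.inl (Or.inr ⟨h, Or.inr ⟨h', h''⟩⟩)
      · exact Or.inr (Or.inl (Encodable.encode_injective h''))
      · exact Or.inr (Or.inr (Or.inr ⟨h.symm, Or.inr ⟨h'.symm, h''⟩⟩))
    · exact Or.inr (Or.inr (Or.inr ⟨h.symm, Or.inl h'⟩))
  · exact Or.inr (Or.inr (Or.inl h))

theorem klt_asymm {x y : List Bool} (h : klt C x y) : ¬ klt C y x := by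
  intro h'
  exact klt_irrefl (klt_trans h h')

theorem kle_trans {x y z : List Bool} (h1 : kle C x y) (h2 : kle C y z) : kle C x z := by
  rcases h1 with h1 | rfl
  · rcases h2 with h2 | rfl
    · exact Or.inl (klt_trans h1 h2)
    · exact Or.inl h1
  · exact h2

theorem kle_antisymm {x y : List Bool} (h1 : kle C x y) (h2 : kle C y x) : x = y := by
  rcases h1 with h1 | rfl
  · rcases h2 with h2 | rfl
    · exact absurd h2 (klt_asymm h1)
    · rfl
  · rfl

theorem kle_total (x y : List Bool) : kle C x y ∨ kle C y x := by
  rcases klt_trichotomy (C := C) x y with h | h | h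
  · exact Or.inl (Or.inl h)
  · exact Or.inl (Or.inr h)
  · exact Or.inr (Or.inl h)

end Order

/-! ### Enumeration of `PFin C` in `klt` order -/

section Enum

variable (C : Finset (List Bool))

local instance kleIsTrans : IsTrans (List Bool) (kle C) := ⟨fun _ _ _ => kle_trans⟩
local instance kleIsAntisymm : Std.Antisymm (kle C) := ⟨fun _ _ => kle_antisymm⟩
local instance kleIsTotal : Std.Total (kle C) := ⟨kle_total⟩

noncomputable def uEnum : List (List Bool) :=
  Finset.sort (PFin C) (kle C)

theorem uEnum_length : (uEnum C).length = (PFin C).card :=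
  Finset.length_sort (kle C)

theorem uEnum_mem {x : List Bool} : x ∈ uEnum C ↔ x ∈ PFin C :=
  Finset.mem_sort (kle C)

theorem uEnum_nodup : (uEnum C).Nodup :=
  Finset.sort_nodup (PFin C) (kle C)

theorem uEnum_sorted : (uEnum C).Pairwise (kle C) :=
  Finset.pairwise_sort (PFin C) (kle C)

noncomputable def uu (k : ℕ) : List Bool := (uEnum C).getD k []

theorem uu_mem {k : ℕ} (hk : k < (PFin C).card) : uu C k ∈ PFin C := by
  rw [← uEnum_mem (C := C)]
  rw [uu, List.getD_eq_getElem _ _ (by rw [uEnum_length]; exact hk)]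
  exact List.getElem_mem _

theorem uu_strict {i j : ℕ} (hij : i < j) (hj : j < (PFin C).card) :
    klt C (uu C i) (uu C j) := by
  have hi' : i < (uEnum C).length := by rw [uEnum_length]; omega
  have hj' : j < (uEnum C).length := by rw [uEnum_length]; exact hj
  rw [uu, uu, List.getD_eq_getElem _ _ hi', List.getD_eq_getElem _ _ hj']
  have hkle : kle C (uEnum C)[i] (uEnum C)[j] :=
    List.pairwise_iff_getElem.1 (uEnum_sorted C) i j hi' hj' hij
  rcases hkle with h | h
  · exact h
  · exact absurd h (List.pairwise_iff_getElem.1 (uEnum_nodup C) i j hi' hj' hij)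

theorem uu_inj {i j : ℕ} (hi : i < (PFin C).card) (hj : j < (PFin C).card)
    (h : uu C i = uu C j) : i = j := by
  rcases Nat.lt_trichotomy i j with h' | h' | h'
  · exact absurd (h ▸ uu_strict C h' hj) klt_irrefl
  · exact h'
  · exact absurd (h ▸ uu_strict C h' hi) klt_irrefl

theorem uu_surj {x : List Bool} (hx : x ∈ PFin C) : ∃ k < (PFin C).card, uu C k = x := by
  rw [← uEnum_mem (C := C)] at hx
  obtain ⟨k, hk, hkx⟩ := List.mem_iff_getElem.1 hx
  refine ⟨k, by rw [← uEnum_length]; exact hk, ?_⟩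
  rw [uu, List.getD_eq_getElem _ _ hk]
  exact hkx

end Enum

/-! ### Finite universes of short strings -/

def exactLists : ℕ → Finset (List Bool)
  | 0 => {[]}
  | (l + 1) => (exactLists l).image (fun w => true :: w) ∪
      (exactLists l).image (fun w => false :: w)

theorem mem_exactLists : ∀ {l : ℕ} {w : List Bool}, w ∈ exactLists l ↔ w.length = l := by
  intro l
  induction l with
  | zero =>
    intro w
    rw [exactLists]
    simp [List.length_eq_zero_iff]
  | succ l ih =>
    intro w
    rw [exactLists]
    simp only [Finset.mem_union, Finset.mem_image]
    constructor
    · rintro (⟨v, hv, rfl⟩ | ⟨v, hv, rfl⟩) <;> simp [ih.1 hv]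
    · intro hw
      rcases w with _ | ⟨b, w'⟩
      · simp at hw
      · have : w'.length = l := by simpa using hw
        cases b
        · exact Or.inr ⟨w', ih.2 this, rfl⟩
        · exact Or.inl ⟨w', ih.2 this, rfl⟩

def allLists (n : ℕ) : Finset (List Bool) := (Finset.range (n + 1)).biUnion exactLists

theorem mem_allLists {n : ℕ} {w : List Bool} : w ∈ allLists n ↔ w.length ≤ n := by
  rw [allLists, Finset.mem_biUnion]
  constructor
  · rintro ⟨l, hl, hw⟩
    rw [Finset.mem_range] at hl
    have := mem_exactLists.1 hw
    omega
  · intro hw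
    exact ⟨w.length, Finset.mem_range.2 (by omega), mem_exactLists.2 rfl⟩

noncomputable def NFin (n : ℕ) (σ : List Bool) : Finset (List Bool) :=
  (allLists n).filter (fun w => w ∈ NbhdN n σ)

theorem mem_NFin {n : ℕ} {σ w : List Bool} : w ∈ NFin n σ ↔ w ∈ NbhdN n σ := by
  rw [NFin, Finset.mem_filter, mem_allLists]
  exact ⟨fun h => h.2, fun h => ⟨h.2, h⟩⟩

/-! ### `n` smallest elements -/

section NLeast

variable (n : ℕ) (C : Finset (List Bool))

noncomputable def pre (B : Finset (List Bool)) (x : List Bool) : Finset (List Bool) :=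
  B.filter (fun y => klt C y x)

noncomputable def nleast (B : Finset (List Bool)) : Finset (List Bool) :=
  B.filter (fun x => (pre C B x).card < n)

variable {n C}

theorem nleast_subset {B : Finset (List Bool)} : nleast n C B ⊆ B := Finset.filter_subset _ _

theorem mem_nleast {B x} : x ∈ nleast n C B ↔ x ∈ B ∧ (pre C B x).card < n :=
  Finset.mem_filter

theorem mem_pre {B x y} : y ∈ pre C B x ↔ y ∈ B ∧ klt C y x := Finset.mem_filter

theorem nleast_down {B : Finset (List Bool)} {x y : List Bool} (hx : x ∈ nleast n C B)
    (hy : y ∈ B) (hyx : klt C y x) : y ∈ nleast n C B := by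
  rw [mem_nleast] at hx ⊢
  refine ⟨hy, lt_of_le_of_lt (Finset.card_le_card ?_) hx.2⟩
  intro z hz
  rw [mem_pre] at hz ⊢
  exact ⟨hz.1, klt_trans hz.2 hyx⟩

theorem nleast_out {B : Finset (List Bool)} {x v : List Bool} (hx : x ∈ B)
    (hxn : x ∉ nleast n C B) (hv : v ∈ nleast n C B) : klt C v x := by
  rcases klt_trichotomy (C := C) v x with h | h | h
  · exact h
  · exact absurd (h ▸ hv) hxn
  · exact absurd (nleast_down hv hx h) hxn

theorem pre_card_lt {B : Finset (List Bool)} {x : List Bool} (hx : x ∈ B) :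
    (pre C B x).card < B.card := by
  have hsub : pre C B x ⊆ B.erase x := by
    intro y hy
    rw [mem_pre] at hy
    refine Finset.mem_erase.2 ⟨?_, hy.1⟩
    intro h
    exact klt_irrefl (h ▸ hy.2)
  calc (pre C B x).card ≤ (B.erase x).card := Finset.card_le_card hsub
    _ < B.card := Finset.card_lt_card (Finset.erase_ssubset hx)

theorem rank_strict {B : Finset (List Bool)} {x y : List Bool} (hx : x ∈ B) (hy : y ∈ B)
    (h : klt C x y) : (pre C B x).card < (pre C B y).card := by
  apply Finset.card_lt_card
  constructor
  · intro z hz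
    rw [mem_pre] at hz ⊢
    exact ⟨hz.1, klt_trans hz.2 h⟩
  · intro hcon
    have hxy : x ∈ pre C B y := mem_pre.2 ⟨hx, h⟩
    have := hcon hxy
    rw [mem_pre] at this
    exact klt_irrefl this.2

theorem nleast_card {B : Finset (List Bool)} : (nleast n C B).card = min n B.card := by
  classical
  have hinj : Set.InjOn (fun x => (pre C B x).card) B := by
    intro x hx y hy hxy
    rcases klt_trichotomy (C := C) x y with h | h | h
    · exact absurd hxy (ne_of_lt (rank_strict hx hy h))
    · exact h
    · exact absurd hxy.symm (ne_of_lt (rank_strict hy hx h))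
  have himg : B.image (fun x => (pre C B x).card) = Finset.range B.card := by
    apply Finset.eq_of_subset_of_card_le
    · intro j hj
      rw [Finset.mem_image] at hj
      obtain ⟨x, hx, rfl⟩ := hj
      exact Finset.mem_range.2 (pre_card_lt hx)
    · rw [Finset.card_range, Finset.card_image_of_injOn hinj]
  have hinj2 : Set.InjOn (fun x => (pre C B x).card) (nleast n C B) :=
    hinj.mono (by exact_mod_cast nleast_subset)
  have himg2 : (nleast n C B).image (fun x => (pre C B x).card) =
      Finset.range B.card ∩ Finset.range n := by
    apply Finset.Subset.antisymm
    · intro j hj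
      rw [Finset.mem_image] at hj
      obtain ⟨x, hx, rfl⟩ := hj
      rw [mem_nleast] at hx
      exact Finset.mem_inter.2 ⟨Finset.mem_range.2 (pre_card_lt hx.1), Finset.mem_range.2 hx.2⟩
    · intro j hj
      rw [Finset.mem_inter] at hj
      have hj1 := hj.1
      rw [← himg, Finset.mem_image] at hj1
      obtain ⟨x, hx, rfl⟩ := hj1
      rw [Finset.mem_image]
      exact ⟨x, mem_nleast.2 ⟨hx, Finset.mem_range.1 hj.2⟩, rfl⟩
  have h1 : (nleast n C B).card = (Finset.range B.card ∩ Finset.range n).card := by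
    rw [← himg2, Finset.card_image_of_injOn hinj2]
  rw [h1]
  have : Finset.range B.card ∩ Finset.range n = Finset.range (min B.card n) := by
    ext j
    simp only [Finset.mem_inter, Finset.mem_range, lt_min_iff]
  rw [this, Finset.card_range]
  omega

theorem nleast_all {B : Finset (List Bool)} (h : B.card ≤ n) : nleast n C B = B := by
  apply Finset.Subset.antisymm nleast_subset
  intro x hx
  rw [mem_nleast]
  exact ⟨hx, lt_of_lt_of_le (pre_card_lt hx) h⟩

end NLeast

end SFF6
namespace SFF6

attribute [local instance] Classical.propDecidable

section Greedy

variable {n : ℕ} {C : Finset (List Bool)}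

/-- The pool of available words after expanding the first `k` elements of `PFin C`. -/
noncomputable def AS (n : ℕ) (C : Finset (List Bool)) : ℕ → Finset (List Bool)
  | 0 => rootCode n
  | (k + 1) => ((AS n C k).erase (uu C k)) ∪ NFin n (uu C k)

theorem ne_nil_ne_one_of_len {x : List Bool} (h : 2 ≤ x.length) : x ≠ [] ∧ x ≠ [true] := by
  constructor <;> rintro rfl <;> simp at h

theorem mem_Dset {x : List Bool} : x ∈ Dset C ↔ x ∈ C ∨ x ∈ PFin C := Finset.mem_union

theorem D_len_le (hCS : C ∈ SCodes n) {x : List Bool} (hx : x ∈ Dset C) :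
    x.length ≤ maxLen C := by
  rcases mem_Dset.1 hx with h | h
  · exact length_le_maxLen h
  · obtain ⟨_, _, _, w, hw, hpre, hne⟩ := mem_PFin.1 h
    exact le_of_lt (lt_of_lt_of_le (prefix_proper_length hpre hne) (length_le_maxLen hw))

theorem PFin_len_lt {u : List Bool} (hu : u ∈ PFin C) : u.length < maxLen C := by
  obtain ⟨_, _, _, w, hw, hpre, hne⟩ := mem_PFin.1 hu
  exact lt_of_lt_of_le (prefix_proper_length hpre hne) (length_le_maxLen hw)

theorem maxLen_le_n (hCS : C ∈ SCodes n) : maxLen C ≤ n :=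
  Finset.sup_le hCS.2.2.2

theorem PFin_ne_nil {u : List Bool} (hu : u ∈ PFin C) : u ≠ [] := (mem_PFin.1 hu).2.1

theorem PFin_palin {u : List Bool} (hu : u ∈ PFin C) : Palin u := (mem_PFin.1 hu).1

theorem PFin_len_pos {u : List Bool} (hu : u ∈ PFin C) : 1 ≤ u.length := by
  have := PFin_ne_nil hu
  cases hl : u.length
  · exact absurd (List.eq_nil_of_length_eq_zero hl) this
  · omega

/-- Membership characterisation of the pool. -/
theorem mem_AS (hn : 2 ≤ n) : ∀ {k : ℕ}, k ≤ (PFin C).card → ∀ {x : List Bool},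
    (x ∈ AS n C k ↔
      ((x ∈ rootCode n ∨ ∃ j < k, x ∈ NFin n (uu C j)) ∧ ∀ j < k, x ≠ uu C j)) := by
  intro k
  induction k with
  | zero =>
    intro _ x
    rw [AS]
    simp
  | succ k ih =>
    intro hk x
    have hkp : k < (PFin C).card := by omega
    rw [AS, Finset.mem_union, Finset.mem_erase, ih (by omega)]
    constructor
    · rintro (⟨hne, ⟨hor, hnej⟩⟩ | hN)
      · constructor
        · rcases hor with h | ⟨j, hj, h⟩
          · exact Or.inl h
          · exact Or.inr ⟨j, by omega, h⟩
        · intro j hj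
          rcases Nat.lt_or_ge j k with h | h
          · exact hnej j h
          · have : j = k := by omega
            subst this
            exact hne
      · constructor
        · exact Or.inr ⟨k, by omega, hN⟩
        · intro j hj hxj
          have hklt : klt C (uu C k) x :=
            klt_of_length_lt (nbhd_lt (mem_NFin.1 hN).1)
          subst hxj
          rcases Nat.lt_or_ge j k with h | h
          · exact klt_asymm (uu_strict C h hkp) hklt
          · have : j = k := by omega
            subst this
            exact klt_irrefl hklt
    · rintro ⟨hor, hnej⟩
      by_cases hN : x ∈ NFin n (uu C k)
      · exact Or.inr hN
      · left
        refine ⟨hnej k (by omega), ?_, fun j hj => hnej j (by omega)⟩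
        rcases hor with h | ⟨j, hj, h⟩
        · exact Or.inl h
        · rcases Nat.lt_or_ge j k with h' | h'
          · exact Or.inr ⟨j, h', h⟩
          · have : j = k := by omega
            subst this
            exact absurd h hN

theorem AS_facts (hn : 2 ≤ n) {k : ℕ} (hk : k ≤ (PFin C).card) {x : List Bool}
    (hx : x ∈ AS n C k) :
    Palin x ∧ 1 ≤ x.length ∧ x.length ≤ n ∧ x ≠ [] ∧ x ≠ [true] ∧
      (x ∈ rootCode n ∨ ∃ j < k, x ∈ NFin n (uu C j)) := by
  have hchar := (mem_AS hn hk).1 hx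
  have hmain : Palin x ∧ 1 ≤ x.length ∧ x.length ≤ n ∧ x ≠ [] ∧ x ≠ [true] := by
    rcases hchar.1 with h | ⟨j, hj, h⟩
    · rw [mem_rootCode (by omega)] at h
      exact ⟨isRoot_palin h.1, isRoot_length_pos h.1, h.2, isRoot_ne_nil h.1, isRoot_ne_one h.1⟩
    · have hN := mem_NFin.1 h
      have hlt : (uu C j).length < x.length := nbhd_lt hN.1
      have hj' : 1 ≤ (uu C j).length := PFin_len_pos (uu_mem C (by omega))
      have hne2 := ne_nil_ne_one_of_len (x := x) (by omega)
      exact ⟨nbhd_palin hN.1, by omega, hN.2, hne2.1, hne2.2⟩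
  exact ⟨hmain.1, hmain.2.1, hmain.2.2.1, hmain.2.2.2.1, hmain.2.2.2.2, hchar.1⟩

theorem AS_ancestors (hn : 2 ≤ n) {k : ℕ} (hk : k ≤ (PFin C).card) {x : List Bool}
    (hx : x ∈ AS n C k) {y : List Bool} (hy : Palin y) (hpre : y <+: x) (hne : y ≠ x) :
    y = [] ∨ y = [true] ∨ y ∈ PFin C := by
  rcases (AS_facts hn hk hx).2.2.2.2.2 with h | ⟨j, hj, h⟩
  · rw [mem_rootCode (by omega)] at h
    rcases rootPrefix h.1 hy hpre hne with h' | h'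
    · exact Or.inl h'
    · exact Or.inr (Or.inl h')
  · have hN := (mem_NFin.1 h).1
    have hu : uu C j ∈ PFin C := uu_mem C (by omega)
    have hyle : y.length ≤ (uu C j).length := nbhd_max hN y hy hpre hne
    have hypre : y <+: uu C j := prefix_of_prefix_le hpre (nbhd_prefix hN) hyle
    by_cases hyeq : y = uu C j
    · exact Or.inr (Or.inr (hyeq ▸ hu))
    · by_cases hy0 : y = []
      · exact Or.inl hy0
      by_cases hy1 : y = [true]
      · exact Or.inr (Or.inl hy1)
      exact Or.inr (Or.inr (PFin_closed hu hy hypre hyeq hy0 hy1))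

theorem AS_antichain (hn : 2 ≤ n) {k : ℕ} (hk : k ≤ (PFin C).card) {x y : List Bool}
    (hx : x ∈ AS n C k) (hy : y ∈ AS n C k) (hpre : x <+: y) : x = y := by
  by_contra hne
  have hxf := AS_facts hn hk hx
  rcases hyf : (AS_facts hn hk hy).2.2.2.2.2 with h | ⟨j, hj, h⟩
  all_goals clear hyf
  · rw [mem_rootCode (by omega)] at h
    rcases rootPrefix h.1 hxf.1 hpre hne with h' | h'
    · exact hxf.2.2.2.1 h'
    · exact hxf.2.2.2.2.1 h'
  · have hN := (mem_NFin.1 h).1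
    have hu : uu C j ∈ PFin C := uu_mem C (by omega)
    have hxle : x.length ≤ (uu C j).length := nbhd_max hN x hxf.1 hpre hne
    have hxpre : x <+: uu C j := prefix_of_prefix_le hpre (nbhd_prefix hN) hxle
    by_cases hxeq : x = uu C j
    · exact ((mem_AS hn hk).1 hx).2 j hj hxeq
    · have hxP : x ∈ PFin C :=
        PFin_closed hu hxf.1 hxpre hxeq hxf.2.2.2.1 hxf.2.2.2.2.1
      obtain ⟨i, hi, hix⟩ := uu_surj C hxP
      have hxlt : klt C x (uu C j) := by
        apply klt_of_length_lt
        rcases Nat.lt_or_ge x.length (uu C j).length with h' | h'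
        · exact h'
        · exact absurd (hxpre.eq_of_length (le_antisymm hxle h')) hxeq
      have hij : i < j := by
        rcases Nat.lt_trichotomy i j with h' | h' | h'
        · exact h'
        · exfalso; subst h'; rw [← hix] at hxlt; exact klt_irrefl hxlt
        · exfalso
          have := uu_strict C h' hi
          rw [← hix] at hxlt
          exact klt_asymm this hxlt
      exact ((mem_AS hn hk).1 hx).2 i (by omega) hix.symm

theorem AS_junk_len (hn : 2 ≤ n) (hopt : InOpt n C) (hCS : C ∈ SCodes n) {k : ℕ}
    (hk : k ≤ (PFin C).card) {x : List Bool} (hx : x ∈ AS n C k) (hxD : x ∉ Dset C) :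
    maxLen C ≤ x.length := by
  have hf := AS_facts hn hk hx
  have hxC : x ∉ C := fun h => hxD (mem_Dset.2 (Or.inl h))
  have hxP : x ∉ PFin C := fun h => hxD (mem_Dset.2 (Or.inr h))
  exact junk_bound hn hopt hCS hf.1 hf.2.2.2.1 hf.2.2.2.2.1
    (fun y hy1 hy2 hy3 => AS_ancestors hn hk hx hy1 hy2 hy3) hxC hxP

theorem frontier_card (hn : 2 ≤ n) (hCS : C ∈ SCodes n) {k : ℕ} (hk : k ≤ (PFin C).card) :
    ((AS n C k) ∩ Dset C).card ≤ n := by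
  have h := Finset.card_le_card_of_injOn
    (fun x => if h : ∃ w, w ∈ C ∧ x <+: w then Classical.choose h else [])
    (s := (AS n C k) ∩ Dset C) (t := C)
    (fun x hx => by
      have hD := (Finset.mem_inter.1 hx).2
      have hex : ∃ w, w ∈ C ∧ x <+: w := by
        rcases mem_Dset.1 hD with h' | h'
        · exact ⟨x, h', List.prefix_refl x⟩
        · obtain ⟨_, _, _, w, hw, hpre, _⟩ := mem_PFin.1 h'
          exact ⟨w, hw, hpre⟩
      show (if h : ∃ w, w ∈ C ∧ x <+: w then Classical.choose h else []) ∈ C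
      rw [dif_pos hex]
      exact (Classical.choose_spec hex).1)
    (fun x hx y hy hxy => by
      have hx' := Finset.mem_coe.1 hx
      have hy' := Finset.mem_coe.1 hy
      have hexx : ∃ w, w ∈ C ∧ x <+: w := by
        rcases mem_Dset.1 (Finset.mem_inter.1 hx').2 with h' | h'
        · exact ⟨x, h', List.prefix_refl x⟩
        · obtain ⟨_, _, _, w, hw, hpre, _⟩ := mem_PFin.1 h'
          exact ⟨w, hw, hpre⟩
      have hexy : ∃ w, w ∈ C ∧ y <+: w := by
        rcases mem_Dset.1 (Finset.mem_inter.1 hy').2 with h' | h'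
        · exact ⟨y, h', List.prefix_refl y⟩
        · obtain ⟨_, _, _, w, hw, hpre, _⟩ := mem_PFin.1 h'
          exact ⟨w, hw, hpre⟩
      simp only [dif_pos hexx, dif_pos hexy] at hxy
      have hxw := (Classical.choose_spec hexx).2
      have hyw := (Classical.choose_spec hexy).2
      rw [hxy] at hxw
      have hxA := (Finset.mem_inter.1 hx').1
      have hyA := (Finset.mem_inter.1 hy').1
      rcases le_total x.length y.length with h' | h'
      · exact AS_antichain hn hk hxA hyA (prefix_of_prefix_le hxw hyw h')
      · exact (AS_antichain hn hk hyA hxA (prefix_of_prefix_le hyw hxw h')).symm)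
  rw [hCS.2.1] at h
  exact h

theorem klt_of_D_junk (hCS : C ∈ SCodes n) {x y : List Bool} (hx : x ∈ Dset C)
    (hy : y ∉ Dset C) (hylen : maxLen C ≤ y.length) : klt C x y := by
  have hxlen := D_len_le hCS hx
  rcases Nat.lt_or_ge x.length y.length with h | h
  · exact klt_of_length_lt h
  · have hlen : x.length = y.length := by omega
    right
    refine ⟨hlen, Or.inl ?_⟩
    rw [flag, if_pos hx, flag, if_neg hy]
    omega

theorem frontier_subset_nleast (hn : 2 ≤ n) (hopt : InOpt n C) (hCS : C ∈ SCodes n) {k : ℕ}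
    (hk : k ≤ (PFin C).card) : (AS n C k) ∩ Dset C ⊆ nleast n C (AS n C k) := by
  intro x hx
  rw [Finset.mem_inter] at hx
  rw [mem_nleast]
  refine ⟨hx.1, ?_⟩
  have hsub : pre C (AS n C k) x ⊆ ((AS n C k) ∩ Dset C).erase x := by
    intro y hy
    rw [mem_pre] at hy
    rw [Finset.mem_erase, Finset.mem_inter]
    refine ⟨fun h => klt_irrefl (h ▸ hy.2), hy.1, ?_⟩
    by_contra hyD
    exact klt_asymm hy.2 (klt_of_D_junk hCS hx.2 hyD (AS_junk_len hn hopt hCS hk hy.1 hyD))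
  have h1 : (((AS n C k) ∩ Dset C).erase x).card < ((AS n C k) ∩ Dset C).card :=
    Finset.card_lt_card (Finset.erase_ssubset (Finset.mem_inter.2 hx))
  have h2 := frontier_card hn hCS hk
  have h3 := Finset.card_le_card hsub
  omega

theorem chain_child (hn : 2 ≤ n) (hCS : C ∈ SCodes n) {k : ℕ} (hk : k < (PFin C).card) :
    ∃ c, c ∈ NFin n (uu C k) ∧ c ∈ Dset C ∧ c ∉ AS n C k := by
  have hu : uu C k ∈ PFin C := uu_mem C hk
  obtain ⟨hupal, hu0, hu1, w₀, hw₀, hupre, hune⟩ := mem_PFin.1 hu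
  obtain ⟨c, hcN, hcpre⟩ := exists_chain_child hupal (hCS.1.1 w₀ hw₀) hupre hune
  have hclen : c.length ≤ n := le_trans hcpre.length_le (hCS.2.2.2 w₀ hw₀)
  have hcNF : c ∈ NFin n (uu C k) := mem_NFin.2 ⟨hcN, hclen⟩
  have hculen : (uu C k).length < c.length := nbhd_lt hcN
  have hcD : c ∈ Dset C := by
    by_cases hceq : c = w₀
    · exact mem_Dset.2 (Or.inl (hceq ▸ hw₀))
    · apply mem_Dset.2
      right
      apply mem_PFin.2
      have hulen := PFin_len_pos hu
      have hne2 := ne_nil_ne_one_of_len (x := c) (by omega)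
      exact ⟨nbhd_palin hcN, hne2.1, hne2.2, w₀, hw₀, hcpre, hceq⟩
  refine ⟨c, hcNF, hcD, ?_⟩
  intro hcA
  rcases (AS_facts hn (le_of_lt hk) hcA).2.2.2.2.2 with h | ⟨j, hj, h⟩
  · rw [mem_rootCode (by omega)] at h
    rcases rootPrefix h.1 hupal (nbhd_prefix hcN) (nbhd_ne hcN) with h' | h'
    · exact hu0 h'
    · exact hu1 h'
  · have heq := nbhd_unique (mem_NFin.1 h).1 hcN
    have hjk := uu_inj C (i := j) (j := k) (by omega) hk heq
    omega

theorem AS_card_ge (hn : 2 ≤ n) (hCS : C ∈ SCodes n) :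
    ∀ {k : ℕ}, k ≤ (PFin C).card → n ≤ (AS n C k).card := by
  intro k
  induction k with
  | zero => intro _; rw [AS, card_rootCode]
  | succ k ih =>
    intro hk
    obtain ⟨c, hcNF, _, hcA⟩ := chain_child hn hCS (k := k) (by omega)
    have hsub : insert c ((AS n C k).erase (uu C k)) ⊆ AS n C (k + 1) := by
      intro x hx
      rw [Finset.mem_insert] at hx
      rw [AS, Finset.mem_union]
      rcases hx with rfl | hx
      · exact Or.inr hcNF
      · exact Or.inl hx
    have hcne : c ∉ (AS n C k).erase (uu C k) := fun h => hcA (Finset.mem_of_mem_erase h)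
    have h1 : (insert c ((AS n C k).erase (uu C k))).card =
        ((AS n C k).erase (uu C k)).card + 1 := Finset.card_insert_of_notMem hcne
    have h2 : (AS n C k).card - 1 ≤ ((AS n C k).erase (uu C k)).card := by
      by_cases h : uu C k ∈ AS n C k
      · rw [Finset.card_erase_of_mem h]
      · rw [Finset.erase_eq_of_notMem h]
        omega
    have h3 := Finset.card_le_card hsub
    have h4 := ih (by omega)
    omega

theorem uu_mem_AS (hn : 2 ≤ n) (hCS : C ∈ SCodes n) {k : ℕ} (hk : k < (PFin C).card) :
    uu C k ∈ AS n C k := by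
  have hu : uu C k ∈ PFin C := uu_mem C hk
  obtain ⟨hupal, hu0, hu1, w₀, hw₀, hupre, hune⟩ := mem_PFin.1 hu
  have hulen : (uu C k).length ≤ n := le_of_lt (lt_of_lt_of_le (PFin_len_lt hu) (maxLen_le_n hCS))
  obtain ⟨σ, hσpal, hσpre, hσne, hσmax⟩ := exists_lpp hu0
  rw [mem_AS hn (le_of_lt hk)]
  by_cases hσtriv : σ = [] ∨ σ = [true]
  · -- uu C k is a root word
    have hroot : IsRoot (uu C k) := by
      apply rootChar hupal hu0 hu1
      intro x hx1 hx2 hx3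
      have hxle := hσmax x hx1 hx2 hx3
      have hσlen : σ.length ≤ 1 := by
        rcases hσtriv with rfl | rfl
        · simp
        · simp
      rcases Nat.eq_zero_or_pos x.length with h0 | h0
      · exact Or.inl (List.eq_nil_of_length_eq_zero h0)
      · right
        have hxlen : x.length = 1 := by omega
        have hσlen1 : σ.length = 1 := by omega
        have hσ1 : σ = [true] := by
          rcases hσtriv with rfl | rfl
          · simp at hσlen1
          · rfl
        have hxσ : x <+: σ := prefix_of_prefix_le hx2 hσpre (by omega)
        rw [hσ1] at hxσ
        exact hxσ.eq_of_length (by rw [hxlen]; rfl)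
    refine ⟨Or.inl ((mem_rootCode (by omega)).2 ⟨hroot, hulen⟩), ?_⟩
    intro j hj h
    exact absurd (uu_inj C (by omega) hk h.symm) (by omega)
  · push_neg at hσtriv
    have hσP : σ ∈ PFin C := PFin_closed hu hσpal hσpre hσne hσtriv.1 hσtriv.2
    obtain ⟨j, hjp, hjσ⟩ := uu_surj C hσP
    have hσlt : klt C σ (uu C k) := klt_of_length_lt (prefix_proper_length hσpre hσne)
    have hjk : j < k := by
      rcases Nat.lt_trichotomy j k with h' | h' | h'
      · exact h'
      · exfalso; subst h'; rw [← hjσ] at hσlt; exact klt_irrefl hσlt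
      · exfalso
        have := uu_strict C h' hjp
        rw [← hjσ] at hσlt
        exact klt_asymm this hσlt
    refine ⟨Or.inr ⟨j, hjk, ?_⟩, ?_⟩
    · apply mem_NFin.2
      refine ⟨⟨hupal, hjσ ▸ hσpal, hjσ ▸ hσpre, hjσ ▸ hσne, ?_⟩, hulen⟩
      intro x hx1 hx2 hx3
      rw [hjσ]
      exact hσmax x hx1 hx2 hx3
    · intro j' hj' h
      exact absurd (uu_inj C (by omega) hk h.symm) (by omega)

theorem uu_mem_SS (hn : 2 ≤ n) (hopt : InOpt n C) (hCS : C ∈ SCodes n) {k : ℕ}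
    (hk : k < (PFin C).card) : uu C k ∈ nleast n C (AS n C k) := by
  apply frontier_subset_nleast hn hopt hCS (le_of_lt hk)
  rw [Finset.mem_inter]
  exact ⟨uu_mem_AS hn hCS hk, mem_Dset.2 (Or.inr (uu_mem C hk))⟩

theorem SS_card (hn : 2 ≤ n) (hCS : C ∈ SCodes n) {k : ℕ} (hk : k ≤ (PFin C).card) :
    (nleast n C (AS n C k)).card = n := by
  rw [nleast_card]
  have := AS_card_ge hn hCS hk
  omega

theorem SS_scodes (hn : 2 ≤ n) (hCS : C ∈ SCodes n) {k : ℕ} (hk : k ≤ (PFin C).card) :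
    nleast n C (AS n C k) ∈ SCodes n := by
  refine ⟨⟨?_, ?_⟩, SS_card hn hCS hk, ?_, ?_⟩
  · intro w hw
    exact (AS_facts hn hk (nleast_subset hw)).1
  · intro u hu w hw hpre
    exact AS_antichain hn hk (nleast_subset hu) (nleast_subset hw) hpre
  · intro h
    exact (AS_facts hn hk (nleast_subset h)).2.2.2.2.1 rfl
  · intro w hw
    exact (AS_facts hn hk (nleast_subset hw)).2.2.1

end Greedy

end SFF6
namespace SFF6

attribute [local instance] Classical.propDecidable

section GreedyStep

variable {n : ℕ} {C : Finset (List Bool)}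

theorem uu_not_mem_AS_succ (hn : 2 ≤ n) {k : ℕ} (hk : k < (PFin C).card) :
    uu C k ∉ AS n C (k + 1) := by
  intro h
  exact ((mem_AS hn (by omega)).1 h).2 k (by omega) rfl

theorem SS_sub_succ_mem (hn : 2 ≤ n) (hopt : InOpt n C) (hCS : C ∈ SCodes n) {k : ℕ}
    (hk : k < (PFin C).card) {w : List Bool} (hw : w ∈ nleast n C (AS n C (k + 1)))
    (hwA : w ∈ AS n C k) : w ∈ nleast n C (AS n C k) := by
  by_cases hD : w ∈ Dset C
  · exact frontier_subset_nleast hn hopt hCS (le_of_lt hk) (Finset.mem_inter.2 ⟨hwA, hD⟩)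
  · -- w is "junk": counting argument
    have hk1 : k + 1 ≤ (PFin C).card := by omega
    have hwA1 : w ∈ AS n C (k + 1) := nleast_subset hw
    have hwlen : maxLen C ≤ w.length := AS_junk_len hn hopt hCS hk1 hwA1 hD
    obtain ⟨c, hcNF, hcD, hcA⟩ := chain_child hn hCS hk
    have huD : uu C k ∈ Dset C := mem_Dset.2 (Or.inr (uu_mem C hk))
    have huF : uu C k ∈ (AS n C k) ∩ Dset C :=
      Finset.mem_inter.2 ⟨uu_mem_AS hn hCS hk, huD⟩
    -- frontier grows
    have hFsub : insert c (((AS n C k) ∩ Dset C).erase (uu C k)) ⊆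
        (AS n C (k + 1)) ∩ Dset C := by
      intro x hx
      rw [Finset.mem_insert] at hx
      rcases hx with rfl | hx
      · exact Finset.mem_inter.2 ⟨by rw [AS, Finset.mem_union]; exact Or.inr hcNF, hcD⟩
      · rw [Finset.mem_erase, Finset.mem_inter] at hx
        refine Finset.mem_inter.2 ⟨?_, hx.2.2⟩
        rw [AS, Finset.mem_union]
        exact Or.inl (Finset.mem_erase.2 ⟨hx.1, hx.2.1⟩)
    have hcne : c ∉ ((AS n C k) ∩ Dset C).erase (uu C k) := by
      intro h
      exact hcA (Finset.mem_inter.1 (Finset.mem_of_mem_erase h)).1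
    have hcard1 : ((AS n C k) ∩ Dset C).card ≤ ((AS n C (k + 1)) ∩ Dset C).card := by
      have h1 := Finset.card_le_card hFsub
      rw [Finset.card_insert_of_notMem hcne, Finset.card_erase_of_mem huF] at h1
      have h2 : 1 ≤ ((AS n C k) ∩ Dset C).card := Finset.card_pos.2 ⟨uu C k, huF⟩
      omega
    -- the junk part of the predecessors
    set J := (pre C (AS n C (k + 1)) w).filter (fun y => y ∉ Dset C) with hJ
    have hpre_sub : pre C (AS n C k) w ⊆ ((AS n C k) ∩ Dset C) ∪ J := by
      intro y hy
      rw [mem_pre] at hy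
      rw [Finset.mem_union]
      by_cases hyD : y ∈ Dset C
      · exact Or.inl (Finset.mem_inter.2 ⟨hy.1, hyD⟩)
      · right
        rw [hJ, Finset.mem_filter, mem_pre]
        have hyne : y ≠ uu C k := fun h => hyD (h ▸ huD)
        refine ⟨⟨?_, hy.2⟩, hyD⟩
        rw [AS, Finset.mem_union]
        exact Or.inl (Finset.mem_erase.2 ⟨hyne, hy.1⟩)
    have hFpre : (AS n C (k + 1)) ∩ Dset C ⊆ pre C (AS n C (k + 1)) w := by
      intro y hy
      rw [Finset.mem_inter] at hy
      exact mem_pre.2 ⟨hy.1, klt_of_D_junk hCS hy.2 hD hwlen⟩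
    have hdisj : Disjoint ((AS n C (k + 1)) ∩ Dset C) J := by
      rw [Finset.disjoint_left]
      intro y hy hyJ
      rw [hJ, Finset.mem_filter] at hyJ
      exact hyJ.2 (Finset.mem_inter.1 hy).2
    have hunion : ((AS n C (k + 1)) ∩ Dset C) ∪ J ⊆ pre C (AS n C (k + 1)) w :=
      Finset.union_subset hFpre (hJ ▸ Finset.filter_subset _ _)
    have hwn : (pre C (AS n C (k + 1)) w).card < n := (mem_nleast.1 hw).2
    have hcalc : (pre C (AS n C k) w).card < n := by
      calc (pre C (AS n C k) w).card
          ≤ (((AS n C k) ∩ Dset C) ∪ J).card := Finset.card_le_card hpre_sub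
        _ ≤ ((AS n C k) ∩ Dset C).card + J.card := Finset.card_union_le _ _
        _ ≤ ((AS n C (k + 1)) ∩ Dset C).card + J.card := by omega
        _ = (((AS n C (k + 1)) ∩ Dset C) ∪ J).card := (Finset.card_union_of_disjoint hdisj).symm
        _ ≤ (pre C (AS n C (k + 1)) w).card := Finset.card_le_card hunion
        _ < n := hwn
    exact mem_nleast.2 ⟨hwA, hcalc⟩

theorem SS_step (hn : 2 ≤ n) (hopt : InOpt n C) (hCS : C ∈ SCodes n) {k : ℕ}
    (hk : k < (PFin C).card) :
    StepTo n (uu C k) (nleast n C (AS n C k)) (nleast n C (AS n C (k + 1))) := by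
  have hk1 : k + 1 ≤ (PFin C).card := by omega
  refine ⟨⟨uu_mem_SS hn hopt hCS hk, ?_⟩, SS_card hn hCS hk1, ?_⟩
  · intro w hw
    have hwA1 : w ∈ AS n C (k + 1) := nleast_subset hw
    have hwne : w ≠ uu C k := fun h => uu_not_mem_AS_succ hn hk (h ▸ hwA1)
    refine ⟨?_, hwne⟩
    by_cases hN : w ∈ NbhdN n (uu C k)
    · exact Or.inr hN
    · left
      have hchar := (mem_AS hn hk1).1 hwA1
      have hwAk : w ∈ AS n C k := by
        rw [mem_AS hn (le_of_lt hk)]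
        constructor
        · rcases hchar.1 with h | ⟨j, hj, h⟩
          · exact Or.inl h
          · rcases Nat.lt_or_ge j k with h' | h'
            · exact Or.inr ⟨j, h', h⟩
            · have : j = k := by omega
              subst this
              exact absurd (mem_NFin.1 h) hN
        · intro j hj
          exact hchar.2 j (by omega)
      exact SS_sub_succ_mem hn hopt hCS hk hw hwAk
  · intro w hworN hwne hwT v hv
    have hwA1 : w ∈ AS n C (k + 1) := by
      rcases hworN with h | h
      · rw [AS, Finset.mem_union]
        exact Or.inl (Finset.mem_erase.2 ⟨hwne, nleast_subset h⟩)
      · rw [AS, Finset.mem_union]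
        exact Or.inr (mem_NFin.2 h)
    exact klt_length_le (nleast_out hwA1 hwT hv)

theorem SS_zero : nleast n C (AS n C 0) = rootCode n := by
  rw [AS]
  exact nleast_all (le_of_eq (card_rootCode n))

theorem C_subset_AS_final (hn : 2 ≤ n) (hCS : C ∈ SCodes n) :
    C ⊆ AS n C (PFin C).card := by
  intro w hw
  have hwpal : Palin w := hCS.1.1 w hw
  have hw0 : w ≠ [] := fun h => scodes_nil_not_mem hn hCS (h ▸ hw)
  have hw1 : w ≠ [true] := fun h => hCS.2.2.1 (h ▸ hw)
  have hwlen : w.length ≤ n := hCS.2.2.2 w hw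
  obtain ⟨σ, hσpal, hσpre, hσne, hσmax⟩ := exists_lpp hw0
  rw [mem_AS hn le_rfl]
  have hne_uu : ∀ j < (PFin C).card, w ≠ uu C j := by
    intro j hj h
    exact PFin_disjoint_self hCS.1 (h ▸ uu_mem C hj) hw
  by_cases hσtriv : σ = [] ∨ σ = [true]
  · have hroot : IsRoot w := by
      apply rootChar hwpal hw0 hw1
      intro x hx1 hx2 hx3
      have hxle := hσmax x hx1 hx2 hx3
      have hσlen : σ.length ≤ 1 := by
        rcases hσtriv with rfl | rfl
        · simp
        · simp
      rcases Nat.eq_zero_or_pos x.length with h0 | h0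
      · exact Or.inl (List.eq_nil_of_length_eq_zero h0)
      · right
        have hxlen : x.length = 1 := by omega
        have hσlen1 : σ.length = 1 := by omega
        have hσ1 : σ = [true] := by
          rcases hσtriv with rfl | rfl
          · simp at hσlen1
          · rfl
        have hxσ : x <+: σ := prefix_of_prefix_le hx2 hσpre (by omega)
        rw [hσ1] at hxσ
        exact hxσ.eq_of_length (by rw [hxlen]; rfl)
    exact ⟨Or.inl ((mem_rootCode (by omega)).2 ⟨hroot, hwlen⟩), hne_uu⟩
  · push_neg at hσtriv
    have hσP : σ ∈ PFin C := mem_PFin.2 ⟨hσpal, hσtriv.1, hσtriv.2, w, hw, hσpre, hσne⟩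
    obtain ⟨j, hjp, hjσ⟩ := uu_surj C hσP
    refine ⟨Or.inr ⟨j, hjp, ?_⟩, hne_uu⟩
    apply mem_NFin.2
    refine ⟨⟨hwpal, hjσ ▸ hσpal, hjσ ▸ hσpre, hjσ ▸ hσne, ?_⟩, hwlen⟩
    intro x hx1 hx2 hx3
    rw [hjσ]
    exact hσmax x hx1 hx2 hx3

theorem SS_final (hn : 2 ≤ n) (hopt : InOpt n C) (hCS : C ∈ SCodes n) :
    nleast n C (AS n C (PFin C).card) = C := by
  have hsub : C ⊆ nleast n C (AS n C (PFin C).card) := by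
    intro w hw
    exact frontier_subset_nleast hn hopt hCS le_rfl
      (Finset.mem_inter.2 ⟨C_subset_AS_final hn hCS hw, mem_Dset.2 (Or.inl hw)⟩)
  exact (Finset.eq_of_subset_of_card_le hsub
    (by rw [SS_card hn hCS le_rfl, hCS.2.1])).symm

theorem greedy_transform (hn : 2 ≤ n) (hopt : InOpt n C) (hCS : C ∈ SCodes n) :
    ∃ S' : ℕ → Finset (List Bool), IsTransform n (PFin C).card S' C := by
  refine ⟨fun k => nleast n C (AS n C (min k (PFin C).card)), ?_, ?_, ?_, ?_⟩
  · show nleast n C (AS n C (min 0 (PFin C).card)) = rootCode n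
    rw [Nat.min_eq_left (Nat.zero_le _)]
    exact SS_zero
  · show nleast n C (AS n C (min (PFin C).card (PFin C).card)) = C
    rw [Nat.min_self]
    exact SS_final hn hopt hCS
  · intro i hi
    show nleast n C (AS n C (min i (PFin C).card)) ∈ SCodes n
    rw [Nat.min_eq_left hi]
    exact SS_scodes hn hCS hi
  · intro i hi
    show ∃ σ, StepTo n σ (nleast n C (AS n C (min i (PFin C).card)))
      (nleast n C (AS n C (min (i + 1) (PFin C).card)))
    rw [Nat.min_eq_left (le_of_lt hi), Nat.min_eq_left (by omega : i + 1 ≤ (PFin C).card)]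
    exact ⟨uu C i, SS_step hn hopt hCS hi⟩

end GreedyStep

end SFF6
open SFF6 in
/-- Let `C ∈ O_n` and `R_n = S⁰ ⇒^{π_1} ⋯ ⇒^{π_m} Sᵐ = C` with all
`Sⁱ ∈ S_n`. This is a shortest `⇒`-transformation from `R_n` to `C` iff each
`π_i` is a prefix of at least one codeword of `C`. -/
theorem shortest_iff_prefixes (n m : ℕ) (C : Finset (List Bool)) (hC : InOpt n C)
    (S : ℕ → Finset (List Bool)) (π : ℕ → List Bool)
    (hT : IsTransformW n m S π C) :
    (∀ (m' : ℕ) (S' : ℕ → Finset (List Bool)), IsTransform n m' S' C → m ≤ m') ↔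
      ∀ i < m, ∃ w ∈ C, π i <+: w := by
  obtain ⟨hS0, hSm, hSC, hW⟩ := hT
  by_cases hn : 2 ≤ n
  · -- main case
    have hCS : C ∈ SCodes n := hSm ▸ hSC m le_rfl
    -- lower bound for any transformation
    have hlow : ∀ (m' : ℕ) (S' : ℕ → Finset (List Bool)), IsTransform n m' S' C →
        (PFin C).card ≤ m' := by
      intro m' S' hTr
      obtain ⟨hS0', hSm', hSC', hEx⟩ := hTr
      obtain ⟨σf', hσf'⟩ : ∃ σf' : ℕ → List Bool,
          ∀ i < m', StepTo n (σf' i) (S' i) (S' (i + 1)) := by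
        choose f hf using hEx
        refine ⟨fun i => if h : i < m' then f i h else [], fun i hi => ?_⟩
        show StepTo n (if h : i < m' then f i h else []) (S' i) (S' (i + 1))
        rw [dif_pos hi]
        exact hf i hi
      exact card_PFin_le hσf' hSC' hS0' hSm'
    constructor
    · -- shortest → prefixes
      intro hshort
      obtain ⟨Sg, hTg⟩ := greedy_transform hn hC hCS
      have hm_le : m ≤ (PFin C).card := hshort _ _ hTg
      have himg : PFin C ⊆ (Finset.range m).image π := by
        intro u hu
        obtain ⟨h1, h2, h3, w, hw, h4, h5⟩ := mem_PFin.1 hu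
        obtain ⟨i, him, hieq⟩ := expanded_of_prefix hW hSC hS0 w.length w rfl m le_rfl
          (by rw [hSm]; exact hw) u h1 h2 h3 h4 h5
        exact Finset.mem_image.2 ⟨i, Finset.mem_range.2 him, hieq⟩
      have hcard_img : ((Finset.range m).image π).card ≤ m := by
        calc ((Finset.range m).image π).card ≤ (Finset.range m).card :=
              Finset.card_image_le
          _ = m := Finset.card_range m
      have heq : PFin C = (Finset.range m).image π :=
        Finset.eq_of_subset_of_card_le himg (le_trans hcard_img hm_le)
      intro i hi
      have hmem : π i ∈ PFin C := by
        rw [heq]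
        exact Finset.mem_image.2 ⟨i, Finset.mem_range.2 hi, rfl⟩
      obtain ⟨_, _, _, w, hw, hpre, _⟩ := mem_PFin.1 hmem
      exact ⟨w, hw, hpre⟩
    · -- prefixes → shortest
      intro hpref m' S' hTr'
      have hπmem : ∀ i < m, π i ∈ PFin C := by
        intro i hi
        obtain ⟨w, hw, hpre⟩ := hpref i hi
        have hstep := hW i hi
        have hπSi : π i ∈ S i := hstep.1.1
        have hπpal : Palin (π i) := (hSC i (le_of_lt hi)).1.1 _ hπSi
        have hπ1 : π i ≠ [true] := fun h => (hSC i (le_of_lt hi)).2.2.1 (h ▸ hπSi)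
        have hπ0 : π i ≠ [] := fun h => scodes_nil_not_mem hn (hSC i (le_of_lt hi)) (h ▸ hπSi)
        have hπnotC : π i ∉ C := by
          have hrem : π i ∉ S (i + 1) := step_removed hstep
          rcases Nat.eq_or_lt_of_le (show i + 1 ≤ m by omega) with h | h
          · rw [← hSm, ← h]
            exact hrem
          · rw [← hSm]
            exact perm_lemma hn hW hSC hS0 hi hπSi hrem (by omega) le_rfl
        exact mem_PFin.2 ⟨hπpal, hπ0, hπ1, w, hw, hpre, fun hh => hπnotC (hh ▸ hw)⟩
      have key : ∀ a b, a < b → b < m → π a ≠ π b := by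
        intro a b hab hbm heqab
        have hstepa := hW a (by omega)
        have hnot : π a ∉ S b := perm_lemma hn hW hSC hS0 (by omega) hstepa.1.1
          (step_removed hstepa) (by omega) (by omega)
        exact hnot (heqab ▸ (hW b hbm).1.1)
      have hinj : Set.InjOn π (Finset.range m) := by
        intro i hi j hj hij
        have hi' := Finset.mem_range.1 (Finset.mem_coe.1 hi)
        have hj' := Finset.mem_range.1 (Finset.mem_coe.1 hj)
        rcases Nat.lt_trichotomy i j with h | h | h
        · exact absurd hij (key i j h hj')
        · exact h
        · exact absurd hij.symm (key j i h hi')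
      have hm_le : m ≤ (PFin C).card := by
        have := Finset.card_le_card_of_injOn π
          (fun i hi => hπmem i (Finset.mem_range.1 hi)) hinj
        rwa [Finset.card_range] at this
      exact le_trans hm_le (hlow m' S' hTr')
  · -- degenerate case n ≤ 1 : necessarily m = 0
    have hm : m = 0 := by
      by_contra hm0
      have h0m : 0 < m := Nat.pos_of_ne_zero hm0
      have hstep := hW 0 h0m
      have hπ0 : π 0 ∈ S 0 := hstep.1.1
      have hcard0 : (S 0).card = n := (hSC 0 (by omega)).2.1
      have hn2 : n < 2 := by omega
      interval_cases n
      · rw [Finset.card_eq_zero] at hcard0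
        rw [hcard0] at hπ0
        exact Finset.notMem_empty _ hπ0
      · have hroot : π 0 = [false] := by
          rw [hS0, mem_rootCode le_rfl] at hπ0
          rcases hπ0.1 with h | ⟨j, hj⟩
          · exact h
          · exfalso
            have := hπ0.2
            rw [hj] at this
            simp at this
        have hS1 : (S 1).Nonempty := Finset.card_pos.1 (by rw [(hSC 1 h0m).2.1]; omega)
        obtain ⟨w, hw⟩ := hS1
        obtain ⟨hor, hne⟩ := hstep.1.2 w hw
        rcases hor with h | h
        · rw [hS0, mem_rootCode le_rfl] at h
          have hwf : w = [false] := by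
            rcases h.1 with h' | ⟨j, hj⟩
            · exact h'
            · exfalso
              have := h.2
              rw [hj] at this
              simp at this
          rw [hwf, hroot] at hne
          exact hne rfl
        · have h1 := h.2
          have h2 := nbhd_lt h.1
          rw [hroot] at h2
          simp at h2
          omega
    subst hm
    constructor
    · intro _ i hi
      exact absurd hi (Nat.not_lt_zero i)
    · intro _ m' S' _
      exact Nat.zero_le m'
end
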